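/- arXiv:2510.03923 — 2 statements merged into one kernel-verified Lean document; each statement's English description precedes it below -/
import Mathlib

section
/- Suppose ρ is normalized Lipschitz, each filter coefficient t ↦ h_{fgk}^{(ℓ,t)} is continuous on [0,T], W : I² → ℝ is measurable with |W| ≤ 1 a.e., and Z ∈ L^∞(I;ℝ^F). Then for every T > 0 the Graphon Neural Differential Equation dX/dt(t) = Φ(W; X(t); H(t)), X(0) = Z has a unique solution X : [0,T] → L^∞(I;ℝ^F) that is continuously differentiable as a curve in the Banach space L^∞(I;ℝ^F). -/
open MeasureTheory Filter Set
open scoped ENNReal NNReal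

noncomputable section

/-- Lebesgue measure restricted to the unit interval `I = [0,1]`. -/
def μI : Measure ℝ := volume.restrict (Set.Icc (0:ℝ) 1)

/-- Lebesgue measure restricted to the unit square `I² = [0,1]²`. -/
def μI2 : Measure (ℝ × ℝ) := volume.restrict ((Set.Icc (0:ℝ) 1) ×ˢ (Set.Icc (0:ℝ) 1))

/-- The graphon integral operator `(T_W x)(v) = ∫_I W(u,v) x(u) du`. -/
def graphonOp (W : ℝ → ℝ → ℝ) (x : ℝ → ℝ) : ℝ → ℝ :=
  fun v => ∫ u in Set.Icc (0:ℝ) 1, W u v * x u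

/-- `k`-fold composition `T_W^k` (identity for `k = 0`). -/
def graphonIter (W : ℝ → ℝ → ℝ) (k : ℕ) (x : ℝ → ℝ) : ℝ → ℝ :=
  (graphonOp W)^[k] x

/-- `ρ` is normalized Lipschitz: `|ρ x − ρ y| ≤ |x − y|` and `ρ 0 = 0`. -/
def NormalizedLipschitz (ρ : ℝ → ℝ) : Prop :=
  (∀ x y : ℝ, |ρ x - ρ y| ≤ |x - y|) ∧ ρ 0 = 0

/-- One layer of a graphon neural network. -/
def gnnLayer (F K : ℕ) (W : ℝ → ℝ → ℝ) (ρ : ℝ → ℝ)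
    (h : Fin F → Fin F → Fin K → ℝ) (X : Fin F → ℝ → ℝ) : Fin F → ℝ → ℝ :=
  fun f u => ρ (∑ g : Fin F, ∑ k : Fin K, h f g k * graphonIter W (k : ℕ) (X g) u)

/-- The `L`-layer graphon neural network `Φ(W; X; h)`. -/
def gnn (F K L : ℕ) (W : ℝ → ℝ → ℝ) (ρ : ℝ → ℝ)
    (h : Fin L → Fin F → Fin F → Fin K → ℝ) (X : Fin F → ℝ → ℝ) : Fin F → ℝ → ℝ :=
  (List.ofFn h).foldl (fun Y hl => gnnLayer F K W ρ hl Y) X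

/-- The mixed norm `‖X‖_{L^p(I;ℝ^F)} = (∑_f ‖X_f‖_{L^p(I)}²)^{1/2}`. -/
def vecLpNorm (F : ℕ) (p : ℝ≥0∞) (X : Fin F → ℝ → ℝ) : ℝ :=
  Real.sqrt (∑ f : Fin F, ((eLpNorm (X f) p μI).toReal) ^ 2)

/-- `X : ℝ → L^∞(I;ℝ^F)` is, on `[0,T]`, a continuously differentiable solution of the
Graphon-NDE `dX/dt(t) = Φ(W; X(t); H(t))`, `X(0) = Z`, in the Banach space `L^∞(I;ℝ^F)`. -/
def IsGNDESolution (F K L : ℕ) (T : ℝ) (W : ℝ → ℝ → ℝ) (ρ : ℝ → ℝ)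
    (H : ℝ → Fin L → Fin F → Fin F → Fin K → ℝ) (Z : Fin F → ℝ → ℝ)
    (X : ℝ → Fin F → Lp ℝ ⊤ μI) : Prop :=
  (∀ f, (X 0 f : ℝ → ℝ) =ᵐ[μI] Z f) ∧
  ∃ X' : ℝ → Fin F → Lp ℝ ⊤ μI,
    ContinuousOn X' (Set.Icc 0 T) ∧
    ∀ t ∈ Set.Icc (0:ℝ) T,
      HasDerivWithinAt X (X' t) (Set.Icc 0 T) t ∧
      ∀ f, (X' t f : ℝ → ℝ) =ᵐ[μI]
        gnn F K L W ρ (H t) (fun g => (X t g : ℝ → ℝ)) f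

/-- Operator norm (from `L²(I)` to `L²(I)`) of the difference `T_W − T_{W'}`. -/
def graphonOpNormSub (W W' : ℝ → ℝ → ℝ) : ℝ :=
  ⨆ x : {x : ℝ → ℝ // MemLp x 2 μI ∧ eLpNorm x 2 μI ≤ 1},
    (eLpNorm (fun v => graphonOp W x v - graphonOp W' x v) 2 μI).toReal

/-- Left endpoint `u_i = (i−1)/n` of the cell `I_i` containing `u`. -/
def stepPt (n : ℕ) (u : ℝ) : ℝ := (⌊(n : ℝ) * u⌋ : ℝ) / n

/-- Sampled step kernel: `Wₙ(u,v) = W(u_i,u_j)` for `(u,v) ∈ I_i × I_j`. -/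
def sampKernel (W : ℝ → ℝ → ℝ) (n : ℕ) : ℝ → ℝ → ℝ :=
  fun u v => W (stepPt n u) (stepPt n v)

/-- Sampled step datum: `Zₙ(u) = Z(u_i)` for `u ∈ I_i`. -/
def sampDatum (F : ℕ) (Z : Fin F → ℝ → ℝ) (n : ℕ) : Fin F → ℝ → ℝ :=
  fun f u => Z f (stepPt n u)

/-- Support `W⁺ = {(u,v) ∈ I² : W(u,v) = 1}`. -/
def supportSet (W : ℝ → ℝ → ℝ) : Set (ℝ × ℝ) :=
  {p : ℝ × ℝ | p.1 ∈ Set.Icc (0:ℝ) 1 ∧ p.2 ∈ Set.Icc (0:ℝ) 1 ∧ W p.1 p.2 = 1}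

/-- The cell `I_i = [u_i, u_i + 1/n)` containing `u`. -/
def cell (n : ℕ) (u : ℝ) : Set ℝ := Set.Ico (stepPt n u) (stepPt n u + 1 / n)

open scoped Classical in
/-- Cell-intersection step kernel: `Wₙ = 1` on `I_i × I_j` iff `(I_i × I_j) ∩ W⁺ ≠ ∅`. -/
def interKernel (W : ℝ → ℝ → ℝ) (n : ℕ) : ℝ → ℝ → ℝ :=
  fun u v => if ((cell n u ×ˢ cell n v) ∩ supportSet W).Nonempty then 1 else 0

/-- Cell-average step datum: `Zₙ(u) = n ∫_{I_i} Z(v) dv` for `u ∈ I_i`. -/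
def cellAvg (F : ℕ) (Z : Fin F → ℝ → ℝ) (n : ℕ) : Fin F → ℝ → ℝ :=
  fun f u => (n : ℝ) * ∫ v in cell n u, Z f v

/-- Number of closed `δ`-mesh squares `[iδ,(i+1)δ] × [jδ,(j+1)δ]`, `i,j ∈ ℤ`, meeting `Ω`. -/
def meshCount (δ : ℝ) (Ω : Set (ℝ × ℝ)) : ℕ :=
  Set.ncard {p : ℤ × ℤ |
    ((Set.Icc ((p.1 : ℝ) * δ) (((p.1 : ℝ) + 1) * δ) ×ˢ
      Set.Icc ((p.2 : ℝ) * δ) (((p.2 : ℝ) + 1) * δ)) ∩ Ω).Nonempty}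

/-- Upper box-counting dimension `limsup_{δ→0⁺} log N_δ(Ω) / (−log δ)`. -/
def upperBoxDim (Ω : Set (ℝ × ℝ)) : ℝ :=
  Filter.limsup (fun δ : ℝ => Real.log (meshCount δ Ω) / (-Real.log δ))
    (nhdsWithin 0 (Set.Ioi 0))


/-! ### Auxiliary development for the well-posedness proof -/

noncomputable section WellPosedAux

lemma μI_univ : μI Set.univ = 1 := by simp [μI, Real.volume_Icc]

instance : IsFiniteMeasure μI := by
  constructor; rw [μI_univ]; exact ENNReal.one_lt_top

instance : SFinite μI := by unfold μI; infer_instance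

lemma μI_ne_zero : μI ≠ 0 := by
  intro h; have := μI_univ; rw [h] at this; simp at this

instance : NeZero μI := ⟨μI_ne_zero⟩

lemma μI_univ_toReal : (μI Set.univ).toReal = 1 := by rw [μI_univ]; simp

lemma μI2_eq_prod : μI2 = μI.prod μI := by
  rw [μI, μI2, Measure.prod_restrict, ← Measure.volume_eq_prod]

lemma ae_ae_W_le {W : ℝ → ℝ → ℝ} (hWb : ∀ᵐ p ∂μI2, |Function.uncurry W p| ≤ 1) :
    ∀ᵐ v ∂μI, ∀ᵐ u ∂μI, |W u v| ≤ 1 := by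
  rw [μI2_eq_prod] at hWb
  have hswap : ∀ᵐ p ∂(μI.prod μI), |W p.2 p.1| ≤ 1 := by
    have := (Measure.measurePreserving_swap (μ := μI)
      (ν := μI)).quasiMeasurePreserving.tendsto_ae.eventually hWb
    simpa [Function.uncurry] using this
  exact Measure.ae_ae_of_ae_prod hswap

lemma graphonOp_eq (W : ℝ → ℝ → ℝ) (x : ℝ → ℝ) :
    graphonOp W x = fun v => ∫ u, W u v * x u ∂μI := rfl

lemma graphonOp_congr (W : ℝ → ℝ → ℝ) {x y : ℝ → ℝ} (h : x =ᵐ[μI] y) :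
    graphonOp W x = graphonOp W y := by
  funext v
  exact integral_congr_ae (h.mono fun u hu => by simp only [hu])

lemma graphonOp_zero_ae (W : ℝ → ℝ → ℝ) {x : ℝ → ℝ} (h : x =ᵐ[μI] 0) (v : ℝ) :
    graphonOp W x v = 0 := by
  have : graphonOp W x = graphonOp W 0 := graphonOp_congr W h
  rw [this]
  simp [graphonOp]

lemma graphonOp_aestronglyMeasurable {W : ℝ → ℝ → ℝ} (hWm : Measurable (Function.uncurry W))
    {x : ℝ → ℝ} (hx : AEStronglyMeasurable x μI) :
    AEStronglyMeasurable (graphonOp W x) μI := by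
  have h1 : graphonOp W x = graphonOp W (hx.mk x) := graphonOp_congr W hx.ae_eq_mk
  rw [h1, graphonOp_eq]
  have hm : StronglyMeasurable (fun p : ℝ × ℝ => W p.2 p.1 * hx.mk x p.2) := by
    apply Measurable.stronglyMeasurable
    exact (hWm.comp measurable_swap).mul (hx.stronglyMeasurable_mk.measurable.comp measurable_snd)
  exact (hm.integral_prod_right').aestronglyMeasurable

/-- a.e. bounded by `c` and a.e. strongly measurable. -/
def AEB (c : ℝ) (x : ℝ → ℝ) : Prop :=
  AEStronglyMeasurable x μI ∧ ∀ᵐ u ∂μI, |x u| ≤ c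

lemma AEB.mono {c c' : ℝ} {x : ℝ → ℝ} (h : AEB c x) (hcc : c ≤ c') : AEB c' x :=
  ⟨h.1, h.2.mono fun u hu => hu.trans hcc⟩

lemma AEB.nonneg {c : ℝ} {x : ℝ → ℝ} (h : AEB c x) : 0 ≤ c := by
  obtain ⟨u, hu⟩ := h.2.exists
  exact (abs_nonneg _).trans hu

lemma AEB.integrable_mul {W : ℝ → ℝ → ℝ} (hWm : Measurable (Function.uncurry W))
    {c : ℝ} {x : ℝ → ℝ} (hx : AEB c x) (v : ℝ) (hWv : ∀ᵐ u ∂μI, |W u v| ≤ 1) :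
    Integrable (fun u => W u v * x u) μI := by
  have hm : AEStronglyMeasurable (fun u => W u v * x u) μI :=
    ((hWm.comp (measurable_id.prodMk measurable_const)).aestronglyMeasurable).mul hx.1
  apply Integrable.mono' (integrable_const c) hm
  filter_upwards [hx.2, hWv] with u h1 h2
  rw [norm_mul]
  calc ‖W u v‖ * ‖x u‖ ≤ 1 * c := mul_le_mul h2 h1 (abs_nonneg _) zero_le_one
    _ = c := one_mul c

lemma graphonOp_diff {W : ℝ → ℝ → ℝ} (hWm : Measurable (Function.uncurry W))
    (hW2 : ∀ᵐ v ∂μI, ∀ᵐ u ∂μI, |W u v| ≤ 1)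
    {c c' d : ℝ} {x y : ℝ → ℝ} (hx : AEB c x) (hy : AEB c' y)
    (hd : ∀ᵐ u ∂μI, |x u - y u| ≤ d) :
    ∀ᵐ v ∂μI, |graphonOp W x v - graphonOp W y v| ≤ d := by
  filter_upwards [hW2] with v hWv
  have hix := hx.integrable_mul hWm v hWv
  have hiy := hy.integrable_mul hWm v hWv
  have heq : graphonOp W x v - graphonOp W y v = ∫ u, (W u v * x u - W u v * y u) ∂μI := by
    rw [integral_sub hix hiy]; rfl
  rw [heq]
  have hbd : ∀ᵐ u ∂μI, ‖W u v * x u - W u v * y u‖ ≤ d := by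
    filter_upwards [hWv, hd] with u h1 h2
    rw [← mul_sub, norm_mul]
    calc ‖W u v‖ * ‖x u - y u‖ ≤ 1 * d := mul_le_mul h1 h2 (abs_nonneg _) zero_le_one
      _ = d := one_mul d
  calc |∫ u, (W u v * x u - W u v * y u) ∂μI| ≤ ∫ _u, d ∂μI :=
        norm_integral_le_of_norm_le (integrable_const d) hbd
    _ = d := by rw [integral_const, measureReal_def, μI_univ_toReal, smul_eq_mul, one_mul]

lemma graphonOp_AEB {W : ℝ → ℝ → ℝ} (hWm : Measurable (Function.uncurry W))
    (hW2 : ∀ᵐ v ∂μI, ∀ᵐ u ∂μI, |W u v| ≤ 1)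
    {c : ℝ} {x : ℝ → ℝ} (hx : AEB c x) : AEB c (graphonOp W x) := by
  refine ⟨graphonOp_aestronglyMeasurable hWm hx.1, ?_⟩
  have h0 : AEB 0 (fun _ : ℝ => (0:ℝ)) :=
    ⟨aestronglyMeasurable_const, Eventually.of_forall fun u => by simp⟩
  have := graphonOp_diff hWm hW2 hx h0 (hx.2.mono fun u hu => by simpa using hu)
  filter_upwards [this] with v hv
  have h0' : graphonOp W (fun _ => (0:ℝ)) v = 0 :=
    graphonOp_zero_ae W (Eventually.of_forall fun _ => rfl) v
  rw [h0', sub_zero] at hv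
  exact hv

lemma graphonIter_AEB {W : ℝ → ℝ → ℝ} (hWm : Measurable (Function.uncurry W))
    (hW2 : ∀ᵐ v ∂μI, ∀ᵐ u ∂μI, |W u v| ≤ 1)
    {c : ℝ} {x : ℝ → ℝ} (hx : AEB c x) (k : ℕ) : AEB c (graphonIter W k x) := by
  induction k with
  | zero => exact hx
  | succ n ih =>
      have : graphonIter W (n+1) x = graphonOp W (graphonIter W n x) := by
        simp [graphonIter, Function.iterate_succ_apply']
      rw [this]
      exact graphonOp_AEB hWm hW2 ih

lemma graphonIter_diff {W : ℝ → ℝ → ℝ} (hWm : Measurable (Function.uncurry W))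
    (hW2 : ∀ᵐ v ∂μI, ∀ᵐ u ∂μI, |W u v| ≤ 1)
    {c c' d : ℝ} {x y : ℝ → ℝ} (hx : AEB c x) (hy : AEB c' y)
    (hd : ∀ᵐ u ∂μI, |x u - y u| ≤ d) (k : ℕ) :
    ∀ᵐ v ∂μI, |graphonIter W k x v - graphonIter W k y v| ≤ d := by
  induction k with
  | zero => exact hd
  | succ n ih =>
      have e1 : graphonIter W (n+1) x = graphonOp W (graphonIter W n x) := by
        simp [graphonIter, Function.iterate_succ_apply']
      have e2 : graphonIter W (n+1) y = graphonOp W (graphonIter W n y) := by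
        simp [graphonIter, Function.iterate_succ_apply']
      rw [e1, e2]
      exact graphonOp_diff hWm hW2 (graphonIter_AEB hWm hW2 hx n)
        (graphonIter_AEB hWm hW2 hy n) ih

end WellPosedAux

section LayerAux

/-- Total absolute sum of layer coefficients. -/
def coeffSum {F K : ℕ} (h : Fin F → Fin F → Fin K → ℝ) : ℝ :=
  ∑ f : Fin F, ∑ g : Fin F, ∑ k : Fin K, |h f g k|

lemma coeffSum_nonneg {F K : ℕ} (h : Fin F → Fin F → Fin K → ℝ) : 0 ≤ coeffSum h := by
  apply Finset.sum_nonneg; intro f _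
  apply Finset.sum_nonneg; intro g _
  exact Finset.sum_nonneg fun k _ => abs_nonneg _

lemma abs_single_le_coeffSum {F K : ℕ} (h : Fin F → Fin F → Fin K → ℝ)
    (f g : Fin F) (k : Fin K) : |h f g k| ≤ coeffSum h := by
  unfold coeffSum
  calc |h f g k| ≤ ∑ k : Fin K, |h f g k| :=
        Finset.single_le_sum (fun k _ => abs_nonneg (h f g k)) (Finset.mem_univ k)
    _ ≤ ∑ g : Fin F, ∑ k : Fin K, |h f g k| :=
        Finset.single_le_sum
          (f := fun g => ∑ k : Fin K, |h f g k|)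
          (fun g _ => Finset.sum_nonneg fun k _ => abs_nonneg _) (Finset.mem_univ g)
    _ ≤ _ :=
        Finset.single_le_sum
          (f := fun f => ∑ g : Fin F, ∑ k : Fin K, |h f g k|)
          (fun f _ => Finset.sum_nonneg fun g _ => Finset.sum_nonneg fun k _ => abs_nonneg _)
          (Finset.mem_univ f)

variable {F K : ℕ} {W : ℝ → ℝ → ℝ} {ρ : ℝ → ℝ}

lemma rho_lipschitzWith (hρ : NormalizedLipschitz ρ) : LipschitzWith 1 ρ := by
  apply LipschitzWith.of_dist_le_mul
  intro x y
  rw [Real.dist_eq, Real.dist_eq, NNReal.coe_one, one_mul]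
  exact hρ.1 x y

lemma gnnLayer_AEB (hWm : Measurable (Function.uncurry W))
    (hW2 : ∀ᵐ v ∂μI, ∀ᵐ u ∂μI, |W u v| ≤ 1) (hρ : NormalizedLipschitz ρ)
    {c : ℝ} {X : Fin F → ℝ → ℝ} (hX : ∀ g, AEB c (X g))
    (h : Fin F → Fin F → Fin K → ℝ) (f : Fin F) :
    AEB (coeffSum h * c) (gnnLayer F K W ρ h X f) := by
  constructor
  · apply ((rho_lipschitzWith hρ).continuous).comp_aestronglyMeasurable
    apply Finset.aestronglyMeasurable_fun_sum
    intro g _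
    apply Finset.aestronglyMeasurable_fun_sum
    intro k _
    exact (aestronglyMeasurable_const.mul
      ((graphonIter_AEB hWm hW2 (hX g) (k : ℕ)).1))
  · have hae : ∀ᵐ u ∂μI, ∀ g : Fin F, ∀ k : Fin K, |graphonIter W (k : ℕ) (X g) u| ≤ c := by
      rw [MeasureTheory.ae_all_iff]
      intro g
      rw [MeasureTheory.ae_all_iff]
      intro k
      exact (graphonIter_AEB hWm hW2 (hX g) (k : ℕ)).2
    filter_upwards [hae] with u hu
    have h0 : ρ 0 = 0 := hρ.2
    unfold gnnLayer
    calc |ρ (∑ g : Fin F, ∑ k : Fin K, h f g k * graphonIter W (k : ℕ) (X g) u)|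
        = |ρ (∑ g : Fin F, ∑ k : Fin K, h f g k * graphonIter W (k : ℕ) (X g) u) - ρ 0| := by
          rw [h0, sub_zero]
      _ ≤ |(∑ g : Fin F, ∑ k : Fin K, h f g k * graphonIter W (k : ℕ) (X g) u) - 0| :=
          hρ.1 _ _
      _ = |∑ g : Fin F, ∑ k : Fin K, h f g k * graphonIter W (k : ℕ) (X g) u| := by
          rw [sub_zero]
      _ ≤ ∑ g : Fin F, |∑ k : Fin K, h f g k * graphonIter W (k : ℕ) (X g) u| :=
          Finset.abs_sum_le_sum_abs _ _
      _ ≤ ∑ g : Fin F, ∑ k : Fin K, |h f g k * graphonIter W (k : ℕ) (X g) u| :=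
          Finset.sum_le_sum fun g _ => Finset.abs_sum_le_sum_abs _ _
      _ ≤ ∑ g : Fin F, ∑ k : Fin K, |h f g k| * c := by
          apply Finset.sum_le_sum; intro g _
          apply Finset.sum_le_sum; intro k _
          rw [abs_mul]
          exact mul_le_mul_of_nonneg_left (hu g k) (abs_nonneg _)
      _ = (∑ g : Fin F, ∑ k : Fin K, |h f g k|) * c := by
          rw [Finset.sum_mul]
          congr 1
          funext g
          rw [Finset.sum_mul]
      _ ≤ coeffSum h * c := by
          apply mul_le_mul_of_nonneg_right _ ((hX f).nonneg)
          exact Finset.single_le_sum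
            (f := fun f => ∑ g : Fin F, ∑ k : Fin K, |h f g k|)
            (fun f _ => Finset.sum_nonneg fun g _ => Finset.sum_nonneg fun k _ => abs_nonneg _)
            (Finset.mem_univ f)

lemma gnnLayer_diff (hWm : Measurable (Function.uncurry W))
    (hW2 : ∀ᵐ v ∂μI, ∀ᵐ u ∂μI, |W u v| ≤ 1) (hρ : NormalizedLipschitz ρ)
    {c d : ℝ} {X X' : Fin F → ℝ → ℝ} (hX : ∀ g, AEB c (X g)) (hX' : ∀ g, AEB c (X' g))
    (hd : ∀ g, ∀ᵐ u ∂μI, |X g u - X' g u| ≤ d)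
    (h h' : Fin F → Fin F → Fin K → ℝ) (f : Fin F) :
    ∀ᵐ u ∂μI, |gnnLayer F K W ρ h X f u - gnnLayer F K W ρ h' X' f u| ≤
      coeffSum h * d + coeffSum (fun f g k => h f g k - h' f g k) * c := by
  have hdiff : ∀ᵐ u ∂μI, ∀ g : Fin F, ∀ k : Fin K,
      |graphonIter W (k : ℕ) (X g) u - graphonIter W (k : ℕ) (X' g) u| ≤ d := by
    rw [MeasureTheory.ae_all_iff]; intro g
    rw [MeasureTheory.ae_all_iff]; intro k
    exact graphonIter_diff hWm hW2 (hX g) (hX' g) (hd g) (k : ℕ)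
  have hbd : ∀ᵐ u ∂μI, ∀ g : Fin F, ∀ k : Fin K,
      |graphonIter W (k : ℕ) (X' g) u| ≤ c := by
    rw [MeasureTheory.ae_all_iff]; intro g
    rw [MeasureTheory.ae_all_iff]; intro k
    exact (graphonIter_AEB hWm hW2 (hX' g) (k : ℕ)).2
  filter_upwards [hdiff, hbd] with u hu hb
  unfold gnnLayer
  calc |ρ (∑ g : Fin F, ∑ k : Fin K, h f g k * graphonIter W (k : ℕ) (X g) u) -
        ρ (∑ g : Fin F, ∑ k : Fin K, h' f g k * graphonIter W (k : ℕ) (X' g) u)|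
      ≤ |(∑ g : Fin F, ∑ k : Fin K, h f g k * graphonIter W (k : ℕ) (X g) u) -
         (∑ g : Fin F, ∑ k : Fin K, h' f g k * graphonIter W (k : ℕ) (X' g) u)| := hρ.1 _ _
    _ = |∑ g : Fin F, ∑ k : Fin K, (h f g k * graphonIter W (k : ℕ) (X g) u -
         h' f g k * graphonIter W (k : ℕ) (X' g) u)| := by
        rw [← Finset.sum_sub_distrib]
        congr 1
        apply Finset.sum_congr rfl
        intro g _
        rw [← Finset.sum_sub_distrib]
    _ ≤ ∑ g : Fin F, |∑ k : Fin K, (h f g k * graphonIter W (k : ℕ) (X g) u -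
         h' f g k * graphonIter W (k : ℕ) (X' g) u)| := Finset.abs_sum_le_sum_abs _ _
    _ ≤ ∑ g : Fin F, ∑ k : Fin K, |h f g k * graphonIter W (k : ℕ) (X g) u -
         h' f g k * graphonIter W (k : ℕ) (X' g) u| :=
        Finset.sum_le_sum fun g _ => Finset.abs_sum_le_sum_abs _ _
    _ ≤ ∑ g : Fin F, ∑ k : Fin K, (|h f g k| * d + |h f g k - h' f g k| * c) := by
        apply Finset.sum_le_sum; intro g _
        apply Finset.sum_le_sum; intro k _
        have e : h f g k * graphonIter W (k : ℕ) (X g) u -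
            h' f g k * graphonIter W (k : ℕ) (X' g) u =
            h f g k * (graphonIter W (k : ℕ) (X g) u - graphonIter W (k : ℕ) (X' g) u) +
            (h f g k - h' f g k) * graphonIter W (k : ℕ) (X' g) u := by ring
        rw [e]
        calc |h f g k * (graphonIter W (k : ℕ) (X g) u - graphonIter W (k : ℕ) (X' g) u) +
              (h f g k - h' f g k) * graphonIter W (k : ℕ) (X' g) u|
            ≤ |h f g k * (graphonIter W (k : ℕ) (X g) u - graphonIter W (k : ℕ) (X' g) u)| +
              |(h f g k - h' f g k) * graphonIter W (k : ℕ) (X' g) u| := abs_add_le _ _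
          _ ≤ |h f g k| * d + |h f g k - h' f g k| * c := by
              rw [abs_mul, abs_mul]
              exact add_le_add
                (mul_le_mul_of_nonneg_left (hu g k) (abs_nonneg _))
                (mul_le_mul_of_nonneg_left (hb g k) (abs_nonneg _))
    _ = (∑ g : Fin F, ∑ k : Fin K, |h f g k| * d) +
        ∑ g : Fin F, ∑ k : Fin K, |h f g k - h' f g k| * c := by
        rw [← Finset.sum_add_distrib]
        apply Finset.sum_congr rfl
        intro g _
        rw [← Finset.sum_add_distrib]
    _ ≤ coeffSum h * d + coeffSum (fun f g k => h f g k - h' f g k) * c := by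
        apply add_le_add
        · have : ∑ g : Fin F, ∑ k : Fin K, |h f g k| * d =
              (∑ g : Fin F, ∑ k : Fin K, |h f g k|) * d := by
            rw [Finset.sum_mul]; congr 1; funext g; rw [Finset.sum_mul]
          rw [this]
          apply mul_le_mul_of_nonneg_right _ (by
            have := (hd f).exists
            obtain ⟨u0, hu0⟩ := this
            exact (abs_nonneg _).trans hu0)
          exact Finset.single_le_sum
            (f := fun f => ∑ g : Fin F, ∑ k : Fin K, |h f g k|)
            (fun f _ => Finset.sum_nonneg fun g _ => Finset.sum_nonneg fun k _ => abs_nonneg _)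
            (Finset.mem_univ f)
        · have : ∑ g : Fin F, ∑ k : Fin K, |h f g k - h' f g k| * c =
              (∑ g : Fin F, ∑ k : Fin K, |h f g k - h' f g k|) * c := by
            rw [Finset.sum_mul]; congr 1; funext g; rw [Finset.sum_mul]
          rw [this]
          apply mul_le_mul_of_nonneg_right _ ((hX f).nonneg)
          exact Finset.single_le_sum
            (f := fun f => ∑ g : Fin F, ∑ k : Fin K, |h f g k - h' f g k|)
            (fun f _ => Finset.sum_nonneg fun g _ => Finset.sum_nonneg fun k _ => abs_nonneg _)
            (Finset.mem_univ f)

end LayerAux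

section GnnAux

variable {F K : ℕ} {W : ℝ → ℝ → ℝ} {ρ : ℝ → ℝ}

lemma gnn_zero (h : Fin 0 → Fin F → Fin F → Fin K → ℝ) (X : Fin F → ℝ → ℝ) :
    gnn F K 0 W ρ h X = X := by
  unfold gnn
  simp

lemma gnn_succ {L : ℕ} (h : Fin (L+1) → Fin F → Fin F → Fin K → ℝ) (X : Fin F → ℝ → ℝ) :
    gnn F K (L+1) W ρ h X =
      gnn F K L W ρ (fun i => h i.succ) (gnnLayer F K W ρ (h 0) X) := by
  unfold gnn
  rw [List.ofFn_succ, List.foldl_cons]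

lemma gnn_AEB (hWm : Measurable (Function.uncurry W))
    (hW2 : ∀ᵐ v ∂μI, ∀ᵐ u ∂μI, |W u v| ≤ 1) (hρ : NormalizedLipschitz ρ)
    {L : ℕ} {B : ℝ} (hB : 1 ≤ B) (h : Fin L → Fin F → Fin F → Fin K → ℝ)
    (hA : ∀ ℓ, coeffSum (h ℓ) ≤ B)
    {c : ℝ} (hc : 0 ≤ c) {X : Fin F → ℝ → ℝ} (hX : ∀ g, AEB c (X g)) (f : Fin F) :
    AEB (B ^ L * c) (gnn F K L W ρ h X f) := by
  induction L generalizing c X with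
  | zero =>
      rw [gnn_zero]
      exact (hX f).mono (by rw [pow_zero, one_mul])
  | succ n ih =>
      rw [gnn_succ]
      have hlayer : ∀ g, AEB (B * c) (gnnLayer F K W ρ (h 0) X g) := fun g =>
        (gnnLayer_AEB hWm hW2 hρ hX (h 0) g).mono
          (mul_le_mul_of_nonneg_right (hA 0) hc)
      have := ih (fun i => h i.succ) (fun ℓ => hA ℓ.succ)
        (by positivity) hlayer
      exact this.mono (by rw [pow_succ]; ring_nf; exact le_refl _)

lemma gnn_diff (hWm : Measurable (Function.uncurry W))
    (hW2 : ∀ᵐ v ∂μI, ∀ᵐ u ∂μI, |W u v| ≤ 1) (hρ : NormalizedLipschitz ρ)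
    {L : ℕ} {B : ℝ} (hB : 1 ≤ B) (h h' : Fin L → Fin F → Fin F → Fin K → ℝ)
    (hA : ∀ ℓ, coeffSum (h ℓ) ≤ B) (hA' : ∀ ℓ, coeffSum (h' ℓ) ≤ B)
    {c d : ℝ} (hc : 0 ≤ c) (hd0 : 0 ≤ d)
    {X X' : Fin F → ℝ → ℝ} (hX : ∀ g, AEB c (X g)) (hX' : ∀ g, AEB c (X' g))
    (hd : ∀ g, ∀ᵐ u ∂μI, |X g u - X' g u| ≤ d) (f : Fin F) :
    ∀ᵐ u ∂μI, |gnn F K L W ρ h X f u - gnn F K L W ρ h' X' f u| ≤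
      B ^ L * (d + c * ∑ ℓ : Fin L, coeffSum (fun f g k => h ℓ f g k - h' ℓ f g k)) := by
  induction L generalizing c d X X' with
  | zero =>
      rw [gnn_zero, gnn_zero]
      refine (hd f).mono fun u hu => hu.trans ?_
      simp only [pow_zero, one_mul, Finset.univ_eq_empty, Finset.sum_empty, mul_zero, add_zero]
      exact le_refl d
  | succ n ih =>
      rw [gnn_succ, gnn_succ]
      set Y := gnnLayer F K W ρ (h 0) X with hY
      set Y' := gnnLayer F K W ρ (h' 0) X' with hY'
      set D0 := coeffSum (fun f g k => h 0 f g k - h' 0 f g k) with hD0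
      have hD0n : 0 ≤ D0 := coeffSum_nonneg _
      have hYb : ∀ g, AEB (B * c) (Y g) := fun g =>
        (gnnLayer_AEB hWm hW2 hρ hX (h 0) g).mono (mul_le_mul_of_nonneg_right (hA 0) hc)
      have hY'b : ∀ g, AEB (B * c) (Y' g) := fun g =>
        (gnnLayer_AEB hWm hW2 hρ hX' (h' 0) g).mono (mul_le_mul_of_nonneg_right (hA' 0) hc)
      have hYd : ∀ g, ∀ᵐ u ∂μI, |Y g u - Y' g u| ≤ B * d + D0 * c := fun g =>
        (gnnLayer_diff hWm hW2 hρ hX hX' hd (h 0) (h' 0) g).mono fun u hu =>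
          hu.trans (add_le_add (mul_le_mul_of_nonneg_right (hA 0) hd0) (le_refl _))
      have hrec := ih (fun i => h i.succ) (fun i => h' i.succ)
        (fun ℓ => hA ℓ.succ) (fun ℓ => hA' ℓ.succ)
        (by positivity) (by positivity) hYb hY'b hYd
      refine hrec.mono fun u hu => hu.trans ?_
      rw [Fin.sum_univ_succ]
      have hsum : 0 ≤ ∑ ℓ : Fin n, coeffSum
          (fun f g k => h ℓ.succ f g k - h' ℓ.succ f g k) :=
        Finset.sum_nonneg fun ℓ _ => coeffSum_nonneg _
      have hB0 : (0:ℝ) ≤ B := zero_le_one.trans hB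
      have key : B * d + D0 * c + B * c * ∑ ℓ : Fin n,
            coeffSum (fun f g k => h ℓ.succ f g k - h' ℓ.succ f g k) ≤
          B * (d + c * (D0 + ∑ ℓ : Fin n,
            coeffSum (fun f g k => h ℓ.succ f g k - h' ℓ.succ f g k))) := by
        have h1 : D0 * c ≤ B * (c * D0) := by
          calc D0 * c = 1 * (c * D0) := by ring
            _ ≤ B * (c * D0) := mul_le_mul_of_nonneg_right hB (by positivity)
        nlinarith [mul_nonneg hc hsum, mul_nonneg hD0n hc]
      calc B ^ n * (B * d + D0 * c + B * c * ∑ ℓ : Fin n,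
              coeffSum (fun f g k => h ℓ.succ f g k - h' ℓ.succ f g k))
          ≤ B ^ n * (B * (d + c * (D0 + ∑ ℓ : Fin n,
              coeffSum (fun f g k => h ℓ.succ f g k - h' ℓ.succ f g k)))) := by
            apply mul_le_mul_of_nonneg_left key (by positivity)
        _ = B ^ (n+1) * (d + c * (D0 + ∑ ℓ : Fin n,
              coeffSum (fun f g k => h ℓ.succ f g k - h' ℓ.succ f g k))) := by
            rw [pow_succ]; ring

end GnnAux

section LpLift

lemma Lp_ae_bound (f : Lp ℝ ⊤ μI) : ∀ᵐ u ∂μI, |(f : ℝ → ℝ) u| ≤ ‖f‖ := by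
  have h1 := MeasureTheory.enorm_ae_le_eLpNormEssSup (f : ℝ → ℝ) μI
  have hne : eLpNorm (f : ℝ → ℝ) ⊤ μI ≠ ⊤ := Lp.eLpNorm_ne_top f
  rw [eLpNorm_exponent_top] at hne
  filter_upwards [h1] with u hu
  have : ‖(f : ℝ → ℝ) u‖ ≤ (eLpNormEssSup (f : ℝ → ℝ) μI).toReal := by
    have h2 : (‖(f : ℝ → ℝ) u‖ₑ).toReal ≤ (eLpNormEssSup (f : ℝ → ℝ) μI).toReal :=
      ENNReal.toReal_mono hne hu
    simpa using h2
  rw [Lp.norm_def, eLpNorm_exponent_top]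
  exact this

lemma AEB_of_Lp (f : Lp ℝ ⊤ μI) : AEB ‖f‖ (f : ℝ → ℝ) :=
  ⟨Lp.aestronglyMeasurable f, Lp_ae_bound f⟩

variable {F K L : ℕ}

/-- A uniform bound for the layer coefficient sums. -/
def bigB (h : Fin L → Fin F → Fin F → Fin K → ℝ) : ℝ :=
  1 + ∑ ℓ : Fin L, coeffSum (h ℓ)

lemma one_le_bigB (h : Fin L → Fin F → Fin F → Fin K → ℝ) : 1 ≤ bigB h := by
  unfold bigB
  have : 0 ≤ ∑ ℓ : Fin L, coeffSum (h ℓ) := Finset.sum_nonneg fun ℓ _ => coeffSum_nonneg _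
  linarith

lemma coeffSum_le_bigB (h : Fin L → Fin F → Fin F → Fin K → ℝ) (ℓ : Fin L) :
    coeffSum (h ℓ) ≤ bigB h := by
  unfold bigB
  have h1 : coeffSum (h ℓ) ≤ ∑ ℓ : Fin L, coeffSum (h ℓ) :=
    Finset.single_le_sum (f := fun ℓ => coeffSum (h ℓ))
      (fun ℓ _ => coeffSum_nonneg _) (Finset.mem_univ ℓ)
  linarith

variable {W : ℝ → ℝ → ℝ} {ρ : ℝ → ℝ}

lemma gnn_memLp (hWm : Measurable (Function.uncurry W))
    (hW2 : ∀ᵐ v ∂μI, ∀ᵐ u ∂μI, |W u v| ≤ 1) (hρ : NormalizedLipschitz ρ)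
    (h : Fin L → Fin F → Fin F → Fin K → ℝ) (x : Fin F → Lp ℝ ⊤ μI) (f : Fin F) :
    MemLp (gnn F K L W ρ h (fun g => (x g : ℝ → ℝ)) f) ⊤ μI := by
  have hX : ∀ g, AEB ‖x‖ ((x g : ℝ → ℝ)) := fun g =>
    (AEB_of_Lp (x g)).mono (norm_le_pi_norm x g)
  have hx0 : (0:ℝ) ≤ ‖x‖ := norm_nonneg x
  have := gnn_AEB hWm hW2 hρ (one_le_bigB h) h (coeffSum_le_bigB h) hx0 hX f
  exact memLp_top_of_bound this.1 _ (this.2.mono fun u hu => by rwa [Real.norm_eq_abs])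

/-- The graphon neural network as a map on `L^∞(I;ℝ^F)`. -/
def gnnLp (hWm : Measurable (Function.uncurry W))
    (hW2 : ∀ᵐ v ∂μI, ∀ᵐ u ∂μI, |W u v| ≤ 1) (hρ : NormalizedLipschitz ρ)
    (h : Fin L → Fin F → Fin F → Fin K → ℝ) (x : Fin F → Lp ℝ ⊤ μI) :
    Fin F → Lp ℝ ⊤ μI :=
  fun f => (gnn_memLp hWm hW2 hρ h x f).toLp _

lemma gnnLp_coeFn (hWm : Measurable (Function.uncurry W))
    (hW2 : ∀ᵐ v ∂μI, ∀ᵐ u ∂μI, |W u v| ≤ 1) (hρ : NormalizedLipschitz ρ)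
    (h : Fin L → Fin F → Fin F → Fin K → ℝ) (x : Fin F → Lp ℝ ⊤ μI) (f : Fin F) :
    (gnnLp hWm hW2 hρ h x f : ℝ → ℝ) =ᵐ[μI]
      gnn F K L W ρ h (fun g => (x g : ℝ → ℝ)) f :=
  MemLp.coeFn_toLp _

lemma norm_le_of_ae_bound {f : Lp ℝ ⊤ μI} {C : ℝ} (hC : 0 ≤ C)
    (h : ∀ᵐ u ∂μI, |(f : ℝ → ℝ) u| ≤ C) : ‖f‖ ≤ C := by
  rw [Lp.norm_def]
  have : eLpNorm (f : ℝ → ℝ) ⊤ μI ≤ ENNReal.ofReal C := by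
    rw [eLpNorm_exponent_top]
    exact eLpNormEssSup_le_of_ae_bound (h.mono fun u hu => by rwa [Real.norm_eq_abs])
  calc (eLpNorm (f : ℝ → ℝ) ⊤ μI).toReal ≤ (ENNReal.ofReal C).toReal :=
        ENNReal.toReal_mono ENNReal.ofReal_ne_top this
    _ = C := ENNReal.toReal_ofReal hC

/-- Master estimate for the lifted GNN map. -/
lemma gnnLp_norm_sub_le (hWm : Measurable (Function.uncurry W))
    (hW2 : ∀ᵐ v ∂μI, ∀ᵐ u ∂μI, |W u v| ≤ 1) (hρ : NormalizedLipschitz ρ)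
    {B : ℝ} (hB : 1 ≤ B) (h h' : Fin L → Fin F → Fin F → Fin K → ℝ)
    (hA : ∀ ℓ, coeffSum (h ℓ) ≤ B) (hA' : ∀ ℓ, coeffSum (h' ℓ) ≤ B)
    {c : ℝ} (hc : 0 ≤ c) (x x' : Fin F → Lp ℝ ⊤ μI) (hx : ‖x‖ ≤ c) (hx' : ‖x'‖ ≤ c) :
    ‖gnnLp hWm hW2 hρ h x - gnnLp hWm hW2 hρ h' x'‖ ≤
      B ^ L * (‖x - x'‖ + c * ∑ ℓ : Fin L, coeffSum (fun f g k => h ℓ f g k - h' ℓ f g k)) := by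
  have hsum : 0 ≤ ∑ ℓ : Fin L, coeffSum (fun f g k => h ℓ f g k - h' ℓ f g k) :=
    Finset.sum_nonneg fun ℓ _ => coeffSum_nonneg _
  have hB0 : (0:ℝ) ≤ B := zero_le_one.trans hB
  have hbd : (0:ℝ) ≤ B ^ L * (‖x - x'‖ + c * ∑ ℓ : Fin L,
      coeffSum (fun f g k => h ℓ f g k - h' ℓ f g k)) := by positivity
  rw [pi_norm_le_iff_of_nonneg hbd]
  intro f
  have hXa : ∀ g, AEB c ((x g : ℝ → ℝ)) := fun g =>
    (AEB_of_Lp (x g)).mono ((norm_le_pi_norm x g).trans hx)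
  have hX'a : ∀ g, AEB c ((x' g : ℝ → ℝ)) := fun g =>
    (AEB_of_Lp (x' g)).mono ((norm_le_pi_norm x' g).trans hx')
  have hdg : ∀ g, ∀ᵐ u ∂μI, |(x g : ℝ → ℝ) u - (x' g : ℝ → ℝ) u| ≤ ‖x - x'‖ := by
    intro g
    filter_upwards [Lp.coeFn_sub (x g) (x' g), Lp_ae_bound (x g - x' g)] with u h1 h2
    have : (x g : ℝ → ℝ) u - (x' g : ℝ → ℝ) u = ((x g - x' g : Lp ℝ ⊤ μI) : ℝ → ℝ) u := by
      rw [h1]; simp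
    rw [this]
    exact h2.trans (norm_le_pi_norm (x - x') g)
  have hdiff := gnn_diff hWm hW2 hρ hB h h' hA hA' hc (norm_nonneg (x - x')) hXa hX'a hdg f
  have hcoe : ((gnnLp hWm hW2 hρ h x - gnnLp hWm hW2 hρ h' x') f : ℝ → ℝ) =ᵐ[μI]
      fun u => gnn F K L W ρ h (fun g => (x g : ℝ → ℝ)) f u -
        gnn F K L W ρ h' (fun g => (x' g : ℝ → ℝ)) f u := by
    have e : (gnnLp hWm hW2 hρ h x - gnnLp hWm hW2 hρ h' x') f =
        gnnLp hWm hW2 hρ h x f - gnnLp hWm hW2 hρ h' x' f := rfl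
    rw [e]
    filter_upwards [Lp.coeFn_sub (gnnLp hWm hW2 hρ h x f) (gnnLp hWm hW2 hρ h' x' f),
      gnnLp_coeFn hWm hW2 hρ h x f, gnnLp_coeFn hWm hW2 hρ h' x' f] with u h1 h2 h3
    rw [h1]
    simp [h2, h3]
  apply norm_le_of_ae_bound hbd
  filter_upwards [hcoe, hdiff] with u h1 h2
  rw [h1]
  exact h2

end LpLift

section ODEAux

variable {E : Type*} [NormedAddCommGroup E] [NormedSpace ℝ E]

lemma glue_ode_solution (v : ℝ → E → E) {a b c : ℝ} (hab : a ≤ b) (hbc : b ≤ c)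
    {f g : ℝ → E}
    (hf : ∀ t ∈ Set.Icc a b, HasDerivWithinAt f (v t (f t)) (Set.Icc a b) t)
    (hg : ∀ t ∈ Set.Icc b c, HasDerivWithinAt g (v t (g t)) (Set.Icc b c) t)
    (hfg : f b = g b) :
    ∃ G : ℝ → E, G a = f a ∧ G c = g c ∧
      ∀ t ∈ Set.Icc a c, HasDerivWithinAt G (v t (G t)) (Set.Icc a c) t := by
  classical
  refine ⟨fun t => if t ≤ b then f t else g t, by simp [hab], ?_, ?_⟩
  · by_cases hcb : c ≤ b
    · have : b = c := le_antisymm hbc hcb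
      simp [hcb, ← this, hfg]
    · simp [hcb]
  intro t ht
  set G : ℝ → E := fun t => if t ≤ b then f t else g t with hG
  rcases lt_trichotomy t b with htb | htb | htb
  · -- t < b
    have hmem : Set.Iio b ∈ nhds t := Iio_mem_nhds htb
    rw [← hasDerivWithinAt_inter hmem]
    have hsub : Set.Icc a c ∩ Set.Iio b ⊆ Set.Icc a b :=
      fun y hy => ⟨hy.1.1, le_of_lt hy.2⟩
    have hGt : G t = f t := by simp [hG, le_of_lt htb]
    rw [hGt]
    refine ((hf t ⟨ht.1, le_of_lt htb⟩).mono hsub).congr ?_ hGt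
    intro y hy
    have hyb : y ≤ b := le_of_lt (Set.mem_Iio.mp hy.2)
    simp [hG, hyb]
  · -- t = b
    subst htb
    have hGt : G t = f t := by simp [hG]
    have h1 : HasDerivWithinAt G (v t (G t)) (Set.Icc a t) t := by
      rw [hGt]
      refine (hf t ⟨ht.1, le_refl t⟩).congr ?_ hGt
      intro y hy
      simp [hG, hy.2]
    have h2 : HasDerivWithinAt G (v t (G t)) (Set.Icc t c) t := by
      have hGg : G t = g t := by simp [hG, hfg]
      rw [hGt, hfg]
      refine (hg t ⟨le_refl t, ht.2⟩).congr ?_ hGg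
      intro y hy
      by_cases hyb : y ≤ t
      · have : y = t := le_antisymm hyb hy.1
        simp [hG, this, hfg]
      · simp [hG, hyb]
    have := h1.union h2
    rwa [Set.Icc_union_Icc_eq_Icc ht.1 ht.2] at this
  · -- b < t
    have hmem : Set.Ioi b ∈ nhds t := Ioi_mem_nhds htb
    rw [← hasDerivWithinAt_inter hmem]
    have hsub : Set.Icc a c ∩ Set.Ioi b ⊆ Set.Icc b c :=
      fun y hy => ⟨le_of_lt hy.2, hy.1.2⟩
    have hGt : G t = g t := by simp [hG, not_le.mpr htb]
    rw [hGt]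
    refine ((hg t ⟨le_of_lt htb, ht.2⟩).mono hsub).congr ?_ hGt
    intro y hy
    have hyb : b < y := Set.mem_Ioi.mp hy.2
    simp [hG, not_le.mpr hyb]

/-- Global existence on `[a, b]` for a globally Lipschitz vector field vanishing at `0`. -/
lemma exists_ode_solution_of_lipschitz [CompleteSpace E]
    (v : ℝ → E → E) (Λ : ℝ≥0)
    (hlip : ∀ t, LipschitzWith Λ (v t))
    (hcont : ∀ x, Continuous fun t => v t x)
    (hzero : ∀ t, v t 0 = 0) :
    ∀ (n : ℕ) (a b : ℝ) (x₀ : E), a ≤ b → b - a ≤ n * (1 / (2 * (Λ + 1))) →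
      ∃ f : ℝ → E, f a = x₀ ∧
        ∀ t ∈ Set.Icc a b, HasDerivWithinAt f (v t (f t)) (Set.Icc a b) t := by
  have hΛpos : (0:ℝ) < 2 * ((Λ:ℝ) + 1) := by positivity
  set δ : ℝ := 1 / (2 * ((Λ:ℝ) + 1)) with hδ
  have hδpos : 0 < δ := by positivity
  have hnorm : ∀ t (x : E), ‖v t x‖ ≤ Λ * ‖x‖ := by
    intro t x
    have := (hlip t).dist_le_mul x 0
    rwa [dist_eq_norm, dist_eq_norm, hzero, sub_zero, sub_zero] at this
  intro n
  induction n with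
  | zero =>
      intro a b x₀ hab hb
      have hb' : b - a ≤ 0 := by simpa using hb
      have : b = a := le_antisymm (by linarith) hab
      subst this
      refine ⟨fun _ => x₀, rfl, ?_⟩
      intro t ht
      have : t = b := le_antisymm ht.2 ht.1
      subst this
      rw [Set.Icc_self]
      have h0 : HasFDerivWithinAt (fun _ : ℝ => x₀)
          ((1 : ℝ →L[ℝ] ℝ).smulRight (v t ((fun _ : ℝ => x₀) t))) {t} t := by
        simp only [HasFDerivWithinAt, nhdsWithin_singleton, hasFDerivAtFilter_iff_isLittleO,
          Asymptotics.isLittleO_pure, sub_self]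
        simp
      exact h0
  | succ n ih =>
      intro a b x₀ hab hb
      set m := min b (a + δ) with hm
      have ham : a ≤ m := le_min hab (by linarith)
      have hmb : m ≤ b := min_le_left _ _
      -- Picard–Lindelöf on [a, m]
      have hpl : IsPicardLindelof v (tmin := a) (tmax := m) ⟨a, le_refl a, ham⟩ x₀
          (‖x₀‖₊ + 1) 0 (Λ * (2 * ‖x₀‖₊ + 1)) Λ := by
        constructor
        · exact fun t _ => (hlip t).lipschitzOnWith
        · exact fun x _ => (hcont x).continuousOn
        · intro t _ x hx
          push_cast
          have hxn : ‖x‖ ≤ 2 * ‖x₀‖ + 1 := by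
            have hd : ‖x - x₀‖ ≤ ‖x₀‖ + 1 := by
              rw [← dist_eq_norm]
              simpa using Metric.mem_closedBall.mp hx
            have h1 : ‖x‖ - ‖x₀‖ ≤ ‖x - x₀‖ := norm_sub_norm_le x x₀
            linarith
          calc ‖v t x‖ ≤ Λ * ‖x‖ := hnorm t x
            _ ≤ (Λ:ℝ) * (2 * ‖x₀‖ + 1) :=
              mul_le_mul_of_nonneg_left hxn (NNReal.coe_nonneg Λ)
        · push_cast
          rw [sub_zero]
          have h1 : max (m - a) (a - a) ≤ δ := by
            apply max_le
            · have : m ≤ a + δ := min_le_right _ _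
              linarith
            · linarith [hδpos]
          calc (Λ:ℝ) * (2 * ‖x₀‖ + 1) * max (m - a) (a - a)
              ≤ (Λ:ℝ) * (2 * ‖x₀‖ + 1) * δ := by
                apply mul_le_mul_of_nonneg_left h1 (by positivity)
            _ ≤ (2 * ((Λ:ℝ) + 1)) * (‖x₀‖ + 1) * δ := by
                apply mul_le_mul_of_nonneg_right _ (le_of_lt hδpos)
                nlinarith [NNReal.coe_nonneg Λ, norm_nonneg x₀]
            _ = ‖x₀‖ + 1 := by
                rw [hδ]
                field_simp
      obtain ⟨f₁, hf₁a, hf₁⟩ := hpl.exists_eq_forall_mem_Icc_hasDerivWithinAt₀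
      -- induction on [m, b]
      have hrec : b - m ≤ n * δ := by
        rcases le_or_gt b (a + δ) with hc | hc
        · have : m = b := le_antisymm hmb (le_min (le_refl b) hc)
          rw [this]
          simp only [sub_self]
          positivity
        · have hma : m = a + δ := min_eq_right (le_of_lt hc)
          rw [hma]
          have hb' : b - a ≤ (n:ℝ) * δ + δ := by
            push_cast at hb
            linarith
          linarith
      obtain ⟨f₂, hf₂m, hf₂⟩ := ih m b (f₁ m) hmb hrec
      obtain ⟨G, hGa, _, hG⟩ := glue_ode_solution v ham hmb hf₁ hf₂ hf₂m.symm
      exact ⟨G, by rw [hGa, hf₁a], hG⟩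

end ODEAux

section MoreAux

variable {F K : ℕ} {W : ℝ → ℝ → ℝ} {ρ : ℝ → ℝ}

lemma graphonOp_zero_fun (W : ℝ → ℝ → ℝ) : graphonOp W (fun _ => (0:ℝ)) = fun _ => 0 := by
  funext v
  exact graphonOp_zero_ae W (Eventually.of_forall fun _ => rfl) v

lemma graphonIter_zero_fun (W : ℝ → ℝ → ℝ) (k : ℕ) :
    graphonIter W k (fun _ => (0:ℝ)) = fun _ => 0 := by
  induction k with
  | zero => rfl
  | succ n ih =>
      have : graphonIter W (n+1) (fun _ => (0:ℝ)) =
          graphonOp W (graphonIter W n (fun _ => (0:ℝ))) := by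
        simp [graphonIter, Function.iterate_succ_apply']
      rw [this, ih, graphonOp_zero_fun]

lemma gnn_zero_input (hρ : NormalizedLipschitz ρ) {L : ℕ}
    (h : Fin L → Fin F → Fin F → Fin K → ℝ) :
    gnn F K L W ρ h (fun _ _ => (0:ℝ)) = fun _ _ => 0 := by
  induction L with
  | zero => rw [gnn_zero]
  | succ n ih =>
      rw [gnn_succ]
      have hlayer : gnnLayer F K W ρ (h 0) (fun _ _ => (0:ℝ)) = fun _ _ => 0 := by
        funext f u
        unfold gnnLayer
        have : ∀ k : Fin K,
            graphonIter W (k : ℕ) (fun _ => (0:ℝ)) u = 0 := by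
          intro k
          rw [graphonIter_zero_fun]
        simp only [this, mul_zero, Finset.sum_const_zero]
        exact hρ.2
      rw [hlayer, ih]

lemma hasDerivWithinAt_Ici_of_Icc {E : Type*} [NormedAddCommGroup E] [NormedSpace ℝ E]
    {f : ℝ → E} {d : E} {a b t : ℝ} (ht : t ∈ Set.Ico a b)
    (h : HasDerivWithinAt f d (Set.Icc a b) t) : HasDerivWithinAt f d (Set.Ici t) t := by
  have h1 : HasDerivWithinAt f d (Set.Icc t b) t :=
    h.mono (Set.Icc_subset_Icc ht.1 le_rfl)
  rw [← Set.Ici_inter_Iic] at h1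
  exact (hasDerivWithinAt_inter (Iic_mem_nhds ht.2)).mp h1

end MoreAux

end
/-- **Well-posedness of Graphon-NDEs.**
If `ρ` is normalized Lipschitz, each filter coefficient `t ↦ H t ℓ f g k` is continuous on
`[0,T]`, `W : I² → ℝ` is measurable with `|W| ≤ 1` a.e., and `Z ∈ L^∞(I;ℝ^F)`, then for every
`T > 0` the Graphon-NDE `dX/dt = Φ(W; X(t); H(t))`, `X(0) = Z` has a unique solution that is
continuously differentiable as a curve in the Banach space `L^∞(I;ℝ^F)`. -/
theorem graphonNDE_wellPosed
    (F K L : ℕ) (hF : 1 ≤ F) (hK : 1 ≤ K) (hL : 1 ≤ L)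
    (ρ : ℝ → ℝ) (hρ : NormalizedLipschitz ρ)
    (T : ℝ) (hT : 0 < T)
    (H : ℝ → Fin L → Fin F → Fin F → Fin K → ℝ)
    (hH : ∀ ℓ f g k, ContinuousOn (fun t => H t ℓ f g k) (Set.Icc 0 T))
    (W : ℝ → ℝ → ℝ) (hWm : Measurable (Function.uncurry W))
    (hWb : ∀ᵐ p ∂μI2, |Function.uncurry W p| ≤ 1)
    (Z : Fin F → ℝ → ℝ) (hZ : ∀ f, MemLp (Z f) ⊤ μI) :
    ∃ X : ℝ → Fin F → Lp ℝ ⊤ μI,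
      IsGNDESolution F K L T W ρ H Z X ∧
      ∀ Y : ℝ → Fin F → Lp ℝ ⊤ μI,
        IsGNDESolution F K L T W ρ H Z Y → ∀ t ∈ Set.Icc (0:ℝ) T, Y t = X t := by
  classical
  have hW2 : ∀ᵐ v ∂μI, ∀ᵐ u ∂μI, |W u v| ≤ 1 := ae_ae_W_le hWb
  -- clamped time
  set clamp : ℝ → ℝ := fun t => max 0 (min t T) with hclampdef
  have hclampIcc : ∀ t, clamp t ∈ Set.Icc (0:ℝ) T :=
    fun t => ⟨le_max_left _ _, max_le hT.le (min_le_right _ _)⟩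
  have hclampId : ∀ t ∈ Set.Icc (0:ℝ) T, clamp t = t := by
    intro t ht
    simp [hclampdef, min_eq_left ht.2, max_eq_right ht.1]
  have hclampCont : Continuous clamp :=
    continuous_const.max (continuous_id.min continuous_const)
  set Hc : ℝ → Fin L → Fin F → Fin F → Fin K → ℝ := fun t => H (clamp t) with hHc
  have hHcCont : ∀ ℓ f g k, Continuous fun t => Hc t ℓ f g k := by
    intro ℓ f g k
    exact (hH ℓ f g k).comp_continuous hclampCont hclampIcc
  -- uniform coefficient bound
  have hφcont : Continuous fun t => ∑ ℓ : Fin L, coeffSum (Hc t ℓ) := by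
    simp only [coeffSum]
    apply continuous_finset_sum; intro ℓ _
    apply continuous_finset_sum; intro f _
    apply continuous_finset_sum; intro g _
    apply continuous_finset_sum; intro k _
    exact (hHcCont ℓ f g k).abs
  obtain ⟨C0, hC0⟩ := (isCompact_Icc : IsCompact (Set.Icc (0:ℝ) T)).exists_bound_of_continuousOn
    hφcont.continuousOn
  set M : ℝ := max 1 C0 with hM
  have hM1 : 1 ≤ M := le_max_left _ _
  have hM0 : (0:ℝ) ≤ M := zero_le_one.trans hM1
  have hMA : ∀ t, ∀ ℓ, coeffSum (Hc t ℓ) ≤ M := by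
    intro t ℓ
    have h1 : coeffSum (Hc t ℓ) ≤ ∑ ℓ' : Fin L, coeffSum (Hc t ℓ') :=
      Finset.single_le_sum (f := fun ℓ' => coeffSum (Hc t ℓ'))
        (fun _ _ => coeffSum_nonneg _) (Finset.mem_univ ℓ)
    have hcc : clamp (clamp t) = clamp t := hclampId _ (hclampIcc t)
    have h2 : ∑ ℓ' : Fin L, coeffSum (Hc t ℓ') ≤ C0 := by
      have h3 := hC0 (clamp t) (hclampIcc t)
      rw [Real.norm_eq_abs] at h3
      have h4 : ∑ ℓ' : Fin L, coeffSum (Hc t ℓ') =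
          ∑ ℓ' : Fin L, coeffSum (Hc (clamp t) ℓ') := by
        simp only [hHc, hcc]
      rw [h4]
      exact (le_abs_self _).trans h3
    linarith [le_max_right (1:ℝ) C0]
  -- the lifted vector field
  set G : ℝ → (Fin F → Lp ℝ ⊤ μI) → (Fin F → Lp ℝ ⊤ μI) :=
    fun t => gnnLp hWm hW2 hρ (Hc t) with hGdef
  set Λ : ℝ≥0 := (M ^ L).toNNReal with hΛ
  have hΛcoe : (Λ : ℝ) = M ^ L := Real.coe_toNNReal _ (by positivity)
  have hlip : ∀ t, LipschitzWith Λ (G t) := by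
    intro t
    apply LipschitzWith.of_dist_le_mul
    intro x y
    rw [dist_eq_norm, dist_eq_norm, hΛcoe]
    have hzs : ∑ ℓ : Fin L, coeffSum (fun f g k => Hc t ℓ f g k - Hc t ℓ f g k) = 0 := by
      simp [coeffSum]
    have hc0 : (0:ℝ) ≤ max ‖x‖ ‖y‖ := le_trans (norm_nonneg x) (le_max_left _ _)
    have := gnnLp_norm_sub_le hWm hW2 hρ hM1 (Hc t) (Hc t) (hMA t) (hMA t) hc0 x y
      (le_max_left _ _) (le_max_right _ _)
    rw [hzs] at this
    simpa using this
  have hzeroG : ∀ t, G t 0 = 0 := by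
    intro t
    funext f
    apply MeasureTheory.Lp.ext
    have h1 := gnnLp_coeFn hWm hW2 hρ (Hc t) 0 f
    have hXa : ∀ g : Fin F, AEB 0 (((0 : Fin F → Lp ℝ ⊤ μI) g : ℝ → ℝ)) := by
      intro g
      refine ⟨Lp.aestronglyMeasurable _, ?_⟩
      filter_upwards [Lp.coeFn_zero (E := ℝ) (p := (⊤ : ℝ≥0∞)) (μ := μI)] with u hu
      simp [hu]
    have hX'a : ∀ g : Fin F, AEB 0 (fun _ : ℝ => (0:ℝ)) :=
      fun g => ⟨aestronglyMeasurable_const, Eventually.of_forall fun u => by simp⟩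
    have hdg : ∀ g : Fin F, ∀ᵐ u ∂μI,
        |((0 : Fin F → Lp ℝ ⊤ μI) g : ℝ → ℝ) u - (fun _ : ℝ => (0:ℝ)) u| ≤ 0 := by
      intro g
      filter_upwards [Lp.coeFn_zero (E := ℝ) (p := (⊤ : ℝ≥0∞)) (μ := μI)] with u hu
      simp [hu]
    have hdiff := gnn_diff hWm hW2 hρ hM1 (Hc t) (Hc t) (hMA t) (hMA t) le_rfl le_rfl
      hXa hX'a hdg f
    have h2 : gnn F K L W ρ (Hc t) (fun _ _ => (0:ℝ)) f = fun _ => 0 := by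
      rw [gnn_zero_input hρ]
    refine h1.trans ?_
    have h3 : ∀ᵐ u ∂μI,
        gnn F K L W ρ (Hc t) (fun g => ((0 : Fin F → Lp ℝ ⊤ μI) g : ℝ → ℝ)) f u = 0 := by
      filter_upwards [hdiff] with u hu
      have : gnn F K L W ρ (Hc t) (fun _ _ => (0:ℝ)) f u = 0 := by rw [h2]
      simp only [this, sub_zero] at hu
      have h5 : |gnn F K L W ρ (Hc t)
          (fun g => ((0 : Fin F → Lp ℝ ⊤ μI) g : ℝ → ℝ)) f u| ≤ 0 := by
        refine le_trans hu ?_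
        simp
      exact abs_nonpos_iff.mp h5
    filter_upwards [h3, Lp.coeFn_zero (E := ℝ) (p := (⊤ : ℝ≥0∞)) (μ := μI)] with u hu h0
    simp only [Pi.zero_apply] at hu h0 ⊢
    rw [hu, h0]
  have hcontG : ∀ x, Continuous fun t => G t x := by
    intro x
    rw [continuous_iff_continuousAt]
    intro t₀
    unfold ContinuousAt
    rw [tendsto_iff_dist_tendsto_zero]
    set ψ : ℝ → ℝ := fun s => M ^ L * (‖x - x‖ + ‖x‖ * ∑ ℓ : Fin L,
        coeffSum (fun f g k => Hc s ℓ f g k - Hc t₀ ℓ f g k)) with hψdef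
    have hψc : Continuous ψ := by
      apply continuous_const.mul
      apply continuous_const.add
      apply continuous_const.mul
      simp only [coeffSum]
      apply continuous_finset_sum; intro ℓ _
      apply continuous_finset_sum; intro f _
      apply continuous_finset_sum; intro g _
      apply continuous_finset_sum; intro k _
      exact ((hHcCont ℓ f g k).sub continuous_const).abs
    apply squeeze_zero (fun s => dist_nonneg) (g := ψ)
    · intro s
      rw [dist_eq_norm]
      exact gnnLp_norm_sub_le hWm hW2 hρ hM1 (Hc s) (Hc t₀) (hMA s) (hMA t₀)
        (norm_nonneg x) x x le_rfl le_rfl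
    · have hz : ψ t₀ = 0 := by simp [hψdef, coeffSum]
      have := hψc.tendsto t₀
      rwa [hz] at this
  -- existence
  set Z' : Fin F → Lp ℝ ⊤ μI := fun f => (hZ f).toLp _ with hZ'
  set n : ℕ := ⌈T * (2 * ((Λ:ℝ) + 1))⌉₊ with hn
  have hTn : T - 0 ≤ (n : ℝ) * (1 / (2 * ((Λ:ℝ) + 1))) := by
    have hpos : (0:ℝ) < 2 * ((Λ:ℝ) + 1) := by positivity
    have h3 : T * (2 * ((Λ:ℝ) + 1)) ≤ (n:ℝ) := Nat.le_ceil _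
    rw [sub_zero]
    calc T = T * (2 * ((Λ:ℝ)+1)) * (1 / (2 * ((Λ:ℝ)+1))) := by field_simp
      _ ≤ (n:ℝ) * (1 / (2 * ((Λ:ℝ)+1))) :=
          mul_le_mul_of_nonneg_right h3 (by positivity)
  obtain ⟨X, hX0, hXd⟩ :=
    exists_ode_solution_of_lipschitz G Λ hlip hcontG hzeroG n 0 T Z' hT.le hTn
  have hXcont : ContinuousOn X (Set.Icc 0 T) := fun t ht => (hXd t ht).continuousWithinAt
  have hX'cont : ContinuousOn (fun t => G t (X t)) (Set.Icc 0 T) := by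
    intro t₀ ht₀
    unfold ContinuousWithinAt
    rw [tendsto_iff_dist_tendsto_zero]
    set ψ : ℝ → ℝ := fun s => M ^ L * (‖X t₀ - X t₀‖ + ‖X t₀‖ * ∑ ℓ : Fin L,
        coeffSum (fun f g k => Hc s ℓ f g k - Hc t₀ ℓ f g k)) with hψdef
    have hψc : Continuous ψ := by
      apply continuous_const.mul
      apply continuous_const.add
      apply continuous_const.mul
      simp only [coeffSum]
      apply continuous_finset_sum; intro ℓ _
      apply continuous_finset_sum; intro f _
      apply continuous_finset_sum; intro g _
      apply continuous_finset_sum; intro k _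
      exact ((hHcCont ℓ f g k).sub continuous_const).abs
    apply squeeze_zero (fun s => dist_nonneg) (g := fun s => (Λ:ℝ) * dist (X s) (X t₀) + ψ s)
    · intro s
      calc dist (G s (X s)) (G t₀ (X t₀))
          ≤ dist (G s (X s)) (G s (X t₀)) + dist (G s (X t₀)) (G t₀ (X t₀)) :=
            dist_triangle _ _ _
        _ ≤ (Λ:ℝ) * dist (X s) (X t₀) + ψ s := by
            apply add_le_add ((hlip s).dist_le_mul _ _)
            rw [dist_eq_norm]
            exact gnnLp_norm_sub_le hWm hW2 hρ hM1 (Hc s) (Hc t₀) (hMA s) (hMA t₀)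
              (norm_nonneg _) _ _ le_rfl le_rfl
    · have h1 : Tendsto (fun s => (Λ:ℝ) * dist (X s) (X t₀))
          (nhdsWithin t₀ (Set.Icc 0 T)) (nhds 0) := by
        have hd : Tendsto (fun s => dist (X s) (X t₀))
            (nhdsWithin t₀ (Set.Icc 0 T)) (nhds 0) := by
          have := (hXcont t₀ ht₀).dist (tendsto_const_nhds (x := X t₀)
            (f := nhdsWithin t₀ (Set.Icc 0 T)))
          simpa [dist_self] using this
        have := hd.const_mul ((Λ:ℝ))
        simpa using this
      have h2 : Tendsto ψ (nhdsWithin t₀ (Set.Icc 0 T)) (nhds 0) := by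
        have hz : ψ t₀ = 0 := by simp [hψdef, coeffSum]
        have := hψc.tendsto t₀
        rw [hz] at this
        exact this.mono_left nhdsWithin_le_nhds
      have := h1.add h2
      simpa using this
  refine ⟨X, ⟨?_, ⟨fun t => G t (X t), hX'cont, ?_⟩⟩, ?_⟩
  · intro f
    rw [hX0]
    exact (hZ f).coeFn_toLp
  · intro t ht
    refine ⟨hXd t ht, ?_⟩
    intro f
    have h4 := gnnLp_coeFn hWm hW2 hρ (Hc t) (X t) f
    have h5 : Hc t = H t := by
      simp only [hHc]
      rw [hclampId t ht]
    rw [← h5]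
    exact h4
  · intro Y hY t ht
    obtain ⟨hY0, Y', hY'cont, hYt⟩ := hY
    have hYd : ∀ s ∈ Set.Icc (0:ℝ) T, HasDerivWithinAt Y (G s (Y s)) (Set.Icc 0 T) s := by
      intro s hs
      have h1 := (hYt s hs).1
      have h2 : Y' s = G s (Y s) := by
        funext f
        apply MeasureTheory.Lp.ext
        have h3 := (hYt s hs).2 f
        have h4 := gnnLp_coeFn hWm hW2 hρ (Hc s) (Y s) f
        have h5 : Hc s = H s := by
          simp only [hHc]
          rw [hclampId s hs]
        refine h3.trans ?_
        rw [← h5]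
        exact h4.symm
      rwa [h2] at h1
    have hYcont : ContinuousOn Y (Set.Icc 0 T) := fun s hs => (hYd s hs).continuousWithinAt
    have h0 : Y 0 = X 0 := by
      funext f
      apply MeasureTheory.Lp.ext
      rw [hX0]
      exact (hY0 f).trans ((hZ f).coeFn_toLp).symm
    exact ODE_solution_unique (v := G) (K := Λ) hlip hYcont
      (fun s hs => hasDerivWithinAt_Ici_of_Icc hs (hYd s (Set.mem_Icc_of_Ico hs)))
      hXcont
      (fun s hs => hasDerivWithinAt_Ici_of_Icc hs (hXd s (Set.mem_Icc_of_Ico hs)))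
      h0 ht
end

section
/- Suppose ρ is normalized Lipschitz and each filter coefficient t ↦ h_{fgk}^{(ℓ,t)} is continuous on [0,T]. Let W : I² → ℝ be measurable with |W| ≤ 1, Z ∈ L^∞(I;ℝ^F), and let X be the solution on [0,T] of the Graphon-NDE with kernel W and initial datum Z. For each n, let Wₙ : I² → ℝ be measurable with |Wₙ| ≤ 1, Zₙ ∈ L^∞(I;ℝ^F), and let Xₙ solve the Graphon-NDE with kernel Wₙ, initial datum Zₙ and the same filters. If ‖T_{Wₙ} − T_W‖_{L²(I)→L²(I)} → 0 and ‖Zₙ − Z‖_{L²(I;ℝ^F)} → 0 as n → ∞, then for every T > 0, sup_{t∈[0,T]} ‖Xₙ(t) − X(t)‖_{L²(I;ℝ^F)} → 0 as n → ∞. -/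
open MeasureTheory Filter Set
open scoped ENNReal NNReal

noncomputable section GNDEProof

namespace GNDE

open MeasureTheory Filter Set
open scoped ENNReal NNReal

instance : IsProbabilityMeasure μI := by
  constructor
  rw [μI, Measure.restrict_apply MeasurableSet.univ, Set.univ_inter, Real.volume_Icc]
  norm_num

instance : SFinite μI := by rw [μI]; infer_instance

lemma setInt (f : ℝ → ℝ) : (∫ u in Set.Icc (0:ℝ) 1, f u) = ∫ u, f u ∂μI := rfl

/-- a.e. congruence for graphonOp : equal everywhere. -/
lemma graphonOp_congr {W : ℝ → ℝ → ℝ} {x y : ℝ → ℝ} (h : x =ᵐ[μI] y) :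
    graphonOp W x = graphonOp W y := by
  funext v
  refine setIntegral_congr_ae measurableSet_Icc ?_
  have : ∀ᵐ u ∂μI, x u = y u := h
  rw [μI, ae_restrict_iff' measurableSet_Icc] at this
  filter_upwards [this] with u hu hmem
  rw [hu hmem]

lemma W_meas_left {W : ℝ → ℝ → ℝ} (hWm : Measurable (Function.uncurry W)) (v : ℝ) :
    Measurable fun u => W u v :=
  hWm.comp (measurable_id.prodMk measurable_const)

lemma integrable_W_mul {W : ℝ → ℝ → ℝ} (hWm : Measurable (Function.uncurry W))
    (hWb : ∀ u v, |W u v| ≤ 1) {x : ℝ → ℝ} (hx : MemLp x 2 μI) (v : ℝ) :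
    Integrable (fun u => W u v * x u) μI := by
  have hxi : Integrable x μI := (hx.mono_exponent (by norm_num : (1:ℝ≥0∞) ≤ 2)).integrable le_rfl
  refine Integrable.mono' (hxi.abs) (((W_meas_left hWm v).aemeasurable.mul
    hx.aestronglyMeasurable.aemeasurable).aestronglyMeasurable) ?_
  filter_upwards with u
  rw [Real.norm_eq_abs, abs_mul]
  calc |W u v| * |x u| ≤ 1 * |x u| := by
        exact mul_le_mul_of_nonneg_right (hWb u v) (abs_nonneg _)
    _ = |x u| := one_mul _

/-- L¹ norm is bounded by L² norm, in toReal form. -/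
lemma int_abs_le_n2 {x : ℝ → ℝ} (hx : MemLp x 2 μI) :
    (∫ u, |x u| ∂μI) ≤ (eLpNorm x 2 μI).toReal := by
  have hxi : Integrable x μI := (hx.mono_exponent (by norm_num : (1:ℝ≥0∞) ≤ 2)).integrable le_rfl
  have h1 : (∫ u, |x u| ∂μI) = (eLpNorm x 1 μI).toReal := by
    rw [eLpNorm_one_eq_lintegral_enorm,
      ← integral_norm_eq_lintegral_enorm hx.aestronglyMeasurable]
    simp [Real.norm_eq_abs]
  rw [h1]
  exact ENNReal.toReal_mono hx.eLpNorm_ne_top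
    (eLpNorm_le_eLpNorm_of_exponent_le (by norm_num) hx.aestronglyMeasurable)

end GNDE
noncomputable section GNDEProof2
namespace GNDE
open MeasureTheory Filter Set
open scoped ENNReal NNReal

variable {W W' : ℝ → ℝ → ℝ} {x y : ℝ → ℝ}

/-- Pointwise bound on the graphon operator. -/
lemma graphonOp_ptwise (hWm : Measurable (Function.uncurry W)) (hWb : ∀ u v, |W u v| ≤ 1)
    (hx : MemLp x 2 μI) (v : ℝ) :
    |graphonOp W x v| ≤ (eLpNorm x 2 μI).toReal := by
  have hi := integrable_W_mul hWm hWb hx v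
  calc |graphonOp W x v| = |∫ u, W u v * x u ∂μI| := by rw [graphonOp, setInt]
    _ ≤ ∫ u, |W u v| * |x u| ∂μI := by
        simpa [Real.norm_eq_abs, abs_mul] using
          norm_integral_le_integral_norm (μ := μI) (f := fun u => W u v * x u)
    _ ≤ ∫ u, |x u| ∂μI := by
        have hi2 : Integrable (fun u => |W u v| * |x u|) μI := by
          simpa [abs_mul] using hi.abs
        refine integral_mono hi2
          ((hx.mono_exponent (by norm_num : (1:ℝ≥0∞) ≤ 2)).integrable le_rfl |>.abs) ?_
        intro u
        calc |W u v| * |x u| ≤ 1 * |x u| :=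
              mul_le_mul_of_nonneg_right (hWb u v) (abs_nonneg _)
          _ = |x u| := one_mul _
    _ ≤ (eLpNorm x 2 μI).toReal := int_abs_le_n2 hx

/-- The graphon operator output is (ae) strongly measurable. -/
lemma graphonOp_aesm (hWm : Measurable (Function.uncurry W)) (hx : AEStronglyMeasurable x μI) :
    AEStronglyMeasurable (graphonOp W x) μI := by
  set x' := hx.mk x with hx'
  have hcongr : graphonOp W x = graphonOp W x' := graphonOp_congr hx.ae_eq_mk
  rw [hcongr]
  have : StronglyMeasurable fun v => ∫ u, W u v * x' u ∂μI := by
    have hf : StronglyMeasurable (fun p : ℝ × ℝ => W p.2 p.1 * x' p.2) := by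
      apply Measurable.stronglyMeasurable
      exact (hWm.comp (measurable_snd.prodMk measurable_fst)).mul
        (hx.stronglyMeasurable_mk.measurable.comp measurable_snd)
    exact hf.integral_prod_right'
  exact this.aestronglyMeasurable

/-- MemLp ⊤ of the output. -/
lemma graphonOp_memℒp_top (hWm : Measurable (Function.uncurry W)) (hWb : ∀ u v, |W u v| ≤ 1)
    (hx : MemLp x 2 μI) : MemLp (graphonOp W x) ⊤ μI := by
  refine memLp_top_of_bound (graphonOp_aesm hWm hx.aestronglyMeasurable) ((eLpNorm x 2 μI).toReal) ?_
  filter_upwards with v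
  simpa [Real.norm_eq_abs] using graphonOp_ptwise hWm hWb hx v

lemma graphonOp_memℒp (hWm : Measurable (Function.uncurry W)) (hWb : ∀ u v, |W u v| ≤ 1)
    (hx : MemLp x 2 μI) : MemLp (graphonOp W x) 2 μI :=
  (graphonOp_memℒp_top hWm hWb hx).mono_exponent le_top

/-- L² contraction bound. -/
lemma graphonOp_e2_le (hWm : Measurable (Function.uncurry W)) (hWb : ∀ u v, |W u v| ≤ 1)
    (hx : MemLp x 2 μI) :
    eLpNorm (graphonOp W x) 2 μI ≤ eLpNorm x 2 μI := by
  have hb : ∀ᵐ v ∂μI, ‖graphonOp W x v‖ ≤ (eLpNorm x 2 μI).toReal := by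
    filter_upwards with v
    simpa [Real.norm_eq_abs] using graphonOp_ptwise hWm hWb hx v
  calc eLpNorm (graphonOp W x) 2 μI
      ≤ μI univ ^ (2:ℝ≥0∞).toReal⁻¹ * ENNReal.ofReal (eLpNorm x 2 μI).toReal :=
        eLpNorm_le_of_ae_bound hb
    _ = eLpNorm x 2 μI := by
        rw [measure_univ, ENNReal.one_rpow, one_mul,
          ENNReal.ofReal_toReal hx.eLpNorm_ne_top]

/-- Linearity in the function argument on differences. -/
lemma graphonOp_sub (hWm : Measurable (Function.uncurry W)) (hWb : ∀ u v, |W u v| ≤ 1)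
    (hx : MemLp x 2 μI) (hy : MemLp y 2 μI) :
    graphonOp W (fun u => x u - y u) = fun v => graphonOp W x v - graphonOp W y v := by
  funext v
  rw [graphonOp, graphonOp, graphonOp, setInt, setInt, setInt]
  rw [← integral_sub (integrable_W_mul hWm hWb hx v) (integrable_W_mul hWm hWb hy v)]
  congr 1; funext u; ring

end GNDE
noncomputable section GNDEProof3
namespace GNDE
open MeasureTheory Filter Set
open scoped ENNReal NNReal

/-- short name for the L² norm (toReal). -/
def n2 (f : ℝ → ℝ) : ℝ := (eLpNorm f 2 μI).toReal

lemma n2_nonneg (f : ℝ → ℝ) : 0 ≤ n2 f := ENNReal.toReal_nonneg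

lemma n2_congr {f g : ℝ → ℝ} (h : f =ᵐ[μI] g) : n2 f = n2 g := by
  rw [n2, n2, eLpNorm_congr_ae h]

lemma n2_triangle {f g : ℝ → ℝ} (hf : MemLp f 2 μI) (hg : MemLp g 2 μI) :
    n2 (fun u => f u + g u) ≤ n2 f + n2 g := by
  rw [n2, n2, n2, ← ENNReal.toReal_add hf.eLpNorm_ne_top hg.eLpNorm_ne_top]
  exact ENNReal.toReal_mono (by
      exact ENNReal.add_ne_top.2 ⟨hf.eLpNorm_ne_top, hg.eLpNorm_ne_top⟩)
    (eLpNorm_add_le hf.aestronglyMeasurable hg.aestronglyMeasurable (by norm_num))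

lemma n2_mono_e {f g : ℝ → ℝ} (hg : MemLp g 2 μI)
    (h : eLpNorm f 2 μI ≤ eLpNorm g 2 μI) : n2 f ≤ n2 g :=
  ENNReal.toReal_mono hg.eLpNorm_ne_top h

lemma opNormSub_nonneg (W W' : ℝ → ℝ → ℝ) : 0 ≤ graphonOpNormSub W W' :=
  Real.iSup_nonneg fun _ => ENNReal.toReal_nonneg

variable {W W' : ℝ → ℝ → ℝ} {x y : ℝ → ℝ}

lemma graphonOp_zero : graphonOp W (fun _ => (0:ℝ)) = fun _ => (0:ℝ) := by
  funext v; simp [graphonOp]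

/-- key operator-norm bound. -/
lemma opNormSub_spec (hWm : Measurable (Function.uncurry W)) (hWb : ∀ u v, |W u v| ≤ 1)
    (hW'm : Measurable (Function.uncurry W')) (hW'b : ∀ u v, |W' u v| ≤ 1)
    (hx : MemLp x 2 μI) :
    n2 (fun v => graphonOp W x v - graphonOp W' x v)
      ≤ graphonOpNormSub W W' * n2 x := by
  have hbdd : BddAbove (Set.range fun x : {x : ℝ → ℝ // MemLp x 2 μI ∧ eLpNorm x 2 μI ≤ 1} =>
      (eLpNorm (fun v => graphonOp W x.1 v - graphonOp W' x.1 v) 2 μI).toReal) := by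
    refine ⟨2, ?_⟩
    rintro r ⟨⟨z, hz, hz1⟩, rfl⟩
    have h1 : eLpNorm (fun v => graphonOp W z v - graphonOp W' z v) 2 μI ≤ 2 := by
      have := eLpNorm_sub_le (graphonOp_aesm hWm hz.aestronglyMeasurable)
        (graphonOp_aesm hW'm hz.aestronglyMeasurable) (by norm_num : (1:ℝ≥0∞) ≤ 2)
      refine this.trans ?_
      have b1 := (graphonOp_e2_le hWm hWb hz).trans hz1
      have b2 := (graphonOp_e2_le hW'm hW'b hz).trans hz1
      calc eLpNorm (graphonOp W z) 2 μI + eLpNorm (graphonOp W' z) 2 μI ≤ 1 + 1 :=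
            add_le_add b1 b2
        _ = 2 := by norm_num
    calc (eLpNorm (fun v => graphonOp W z v - graphonOp W' z v) 2 μI).toReal
        ≤ (2:ℝ≥0∞).toReal := ENNReal.toReal_mono (by norm_num) h1
      _ = 2 := by norm_num
  rcases eq_or_lt_of_le (n2_nonneg x) with h0 | hpos
  · -- ‖x‖ = 0 : x =ᵐ 0
    have hx0 : eLpNorm x 2 μI = 0 := by
      have := hx.eLpNorm_ne_top
      rcases ENNReal.toReal_eq_zero_iff _ |>.1 h0.symm with h | h
      · exact h
      · exact absurd h this
    have hxae : x =ᵐ[μI] fun _ => (0:ℝ) := by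
      exact (eLpNorm_eq_zero_iff hx.aestronglyMeasurable (by norm_num)).1 hx0
    have e1 : graphonOp W x = fun _ => (0:ℝ) := by
      rw [graphonOp_congr hxae, graphonOp_zero]
    have e2 : graphonOp W' x = fun _ => (0:ℝ) := by
      rw [graphonOp_congr hxae, graphonOp_zero]
    have : (fun v => graphonOp W x v - graphonOp W' x v) = fun _ => (0:ℝ) := by
      rw [e1, e2]; funext v; simp
    rw [this, ← h0]
    simp [n2]
  · set c := n2 x with hc
    set y := fun u => c⁻¹ * x u with hy
    have hyme : MemLp y 2 μI := hx.const_mul _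
    have hsmul : y = c⁻¹ • x := by funext u; simp [hy]
    have hxe : eLpNorm x 2 μI = ENNReal.ofReal c := by
      rw [hc, n2, ENNReal.ofReal_toReal hx.eLpNorm_ne_top]
    have hye : eLpNorm y 2 μI = 1 := by
      rw [hsmul, eLpNorm_const_smul, hxe]
      rw [← ofReal_norm, ← coe_nnnorm]
      rw [← ENNReal.ofReal_mul (by positivity)]
      have : (‖c⁻¹‖₊ : ℝ) = c⁻¹ := by
        simp [Real.nnnorm_of_nonneg (by positivity : (0:ℝ) ≤ c⁻¹)]
      rw [this, inv_mul_cancel₀ (ne_of_gt hpos), ENNReal.ofReal_one]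
    have hmem : MemLp y 2 μI ∧ eLpNorm y 2 μI ≤ 1 := ⟨hyme, le_of_eq hye⟩
    have hle := le_ciSup hbdd (⟨y, hmem⟩ :
      {x : ℝ → ℝ // MemLp x 2 μI ∧ eLpNorm x 2 μI ≤ 1})
    have hopy : ∀ (V : ℝ → ℝ → ℝ), (∀ u v, |V u v| ≤ 1) → Measurable (Function.uncurry V) →
        graphonOp V y = fun v => c⁻¹ * graphonOp V x v := by
      intro V hVb hVm
      funext v
      rw [graphonOp, graphonOp, setInt, setInt]
      rw [← integral_const_mul]
      congr 1; funext u; ring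
    have hdiff : (fun v => graphonOp W y v - graphonOp W' y v)
        = fun v => c⁻¹ * (graphonOp W x v - graphonOp W' x v) := by
      rw [hopy W hWb hWm, hopy W' hW'b hW'm]
      funext v; ring
    have hscale : (eLpNorm (fun v => graphonOp W y v - graphonOp W' y v) 2 μI).toReal
        = c⁻¹ * n2 (fun v => graphonOp W x v - graphonOp W' x v) := by
      rw [hdiff]
      have : (fun v => c⁻¹ * (graphonOp W x v - graphonOp W' x v))
          = c⁻¹ • fun v => graphonOp W x v - graphonOp W' x v := by
        funext v; simp
      rw [this, eLpNorm_const_smul, n2, ENNReal.toReal_mul]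
      congr 1
      simp [Real.nnnorm_of_nonneg (by positivity : (0:ℝ) ≤ c⁻¹), hpos.le]
    rw [hscale] at hle
    have := mul_le_mul_of_nonneg_right hle (le_of_lt hpos)
    rw [mul_comm c⁻¹ _, mul_assoc, inv_mul_cancel₀ (ne_of_gt hpos), mul_one] at this
    calc n2 (fun v => graphonOp W x v - graphonOp W' x v) ≤ _ := this
      _ ≤ graphonOpNormSub W W' * c := by
        rw [graphonOpNormSub]

lemma graphonIter_succ (k : ℕ) :
    graphonIter W (k+1) x = graphonOp W (graphonIter W k x) := by
  rw [graphonIter, graphonIter, Function.iterate_succ_apply']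

lemma graphonIter_memℒp (hWm : Measurable (Function.uncurry W)) (hWb : ∀ u v, |W u v| ≤ 1)
    (hx : MemLp x 2 μI) (k : ℕ) : MemLp (graphonIter W k x) 2 μI := by
  induction k with
  | zero => exact hx
  | succ k ih => rw [graphonIter_succ]; exact graphonOp_memℒp hWm hWb ih

lemma graphonIter_e2_le (hWm : Measurable (Function.uncurry W)) (hWb : ∀ u v, |W u v| ≤ 1)
    (hx : MemLp x 2 μI) (k : ℕ) :
    eLpNorm (graphonIter W k x) 2 μI ≤ eLpNorm x 2 μI := by
  induction k with
  | zero => exact le_rfl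
  | succ k ih =>
      rw [graphonIter_succ]
      exact (graphonOp_e2_le hWm hWb (graphonIter_memℒp hWm hWb hx k)).trans ih

lemma n2_iter_le (hWm : Measurable (Function.uncurry W)) (hWb : ∀ u v, |W u v| ≤ 1)
    (hx : MemLp x 2 μI) (k : ℕ) : n2 (graphonIter W k x) ≤ n2 x :=
  n2_mono_e hx (graphonIter_e2_le hWm hWb hx k)

/-- Same-kernel Lipschitz bound for iterates. -/
lemma n2_iter_sub_le (hWm : Measurable (Function.uncurry W)) (hWb : ∀ u v, |W u v| ≤ 1)
    (hx : MemLp x 2 μI) (hy : MemLp y 2 μI) (k : ℕ) :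
    n2 (fun u => graphonIter W k x u - graphonIter W k y u) ≤ n2 (fun u => x u - y u) := by
  have key : ∀ k, eLpNorm (fun u => graphonIter W k x u - graphonIter W k y u) 2 μI
      ≤ eLpNorm (fun u => x u - y u) 2 μI := by
    intro k
    induction k with
    | zero => exact le_rfl
    | succ k ih =>
        rw [graphonIter_succ, graphonIter_succ]
        have heq : (fun u => graphonOp W (graphonIter W k x) u - graphonOp W (graphonIter W k y) u)
            = graphonOp W (fun u => graphonIter W k x u - graphonIter W k y u) := by
          rw [graphonOp_sub hWm hWb (graphonIter_memℒp hWm hWb hx k)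
            (graphonIter_memℒp hWm hWb hy k)]
        rw [heq]
        exact (graphonOp_e2_le hWm hWb
          ((graphonIter_memℒp hWm hWb hx k).sub (graphonIter_memℒp hWm hWb hy k))).trans ih
  exact n2_mono_e (hx.sub hy) (key k)

/-- Kernel-perturbation bound for iterates: `‖T'^k x − T^k x‖ ≤ k ε ‖x‖`. -/
lemma n2_iter_kernel_sub (hWm : Measurable (Function.uncurry W)) (hWb : ∀ u v, |W u v| ≤ 1)
    (hW'm : Measurable (Function.uncurry W')) (hW'b : ∀ u v, |W' u v| ≤ 1)
    (hx : MemLp x 2 μI) (k : ℕ) :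
    n2 (fun u => graphonIter W' k x u - graphonIter W k x u)
      ≤ k * graphonOpNormSub W' W * n2 x := by
  induction k with
  | zero =>
      have : (fun u => graphonIter W' 0 x u - graphonIter W 0 x u) = fun _ => (0:ℝ) := by
        funext u; simp [graphonIter]
      rw [this]
      simp [n2]
  | succ k ih =>
      set A := graphonIter W' k x with hA
      set B := graphonIter W k x with hB
      have hAm : MemLp A 2 μI := graphonIter_memℒp hW'm hW'b hx k
      have hBm : MemLp B 2 μI := graphonIter_memℒp hWm hWb hx k
      have hsplit : (fun u => graphonIter W' (k+1) x u - graphonIter W (k+1) x u)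
          = fun u => (graphonOp W' (fun v => A v - B v) u)
            + (graphonOp W' B u - graphonOp W B u) := by
        funext u
        rw [graphonIter_succ, graphonIter_succ, ← hA, ← hB,
          graphonOp_sub hW'm hW'b hAm hBm]
        ring
      rw [hsplit]
      have h1m : MemLp (graphonOp W' (fun v => A v - B v)) 2 μI :=
        graphonOp_memℒp hW'm hW'b (hAm.sub hBm)
      have h2m : MemLp (fun u => graphonOp W' B u - graphonOp W B u) 2 μI :=
        (graphonOp_memℒp hW'm hW'b hBm).sub (graphonOp_memℒp hWm hWb hBm)
      calc n2 (fun u => graphonOp W' (fun v => A v - B v) u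
            + (graphonOp W' B u - graphonOp W B u))
          ≤ n2 (graphonOp W' (fun v => A v - B v))
            + n2 (fun u => graphonOp W' B u - graphonOp W B u) := n2_triangle h1m h2m
        _ ≤ n2 (fun u => A u - B u) + graphonOpNormSub W' W * n2 B := by
            refine add_le_add ?_ (opNormSub_spec hW'm hW'b hWm hWb hBm)
            exact n2_mono_e (hAm.sub hBm) (graphonOp_e2_le hW'm hW'b (hAm.sub hBm))
        _ ≤ k * graphonOpNormSub W' W * n2 x + graphonOpNormSub W' W * n2 x := by
            refine add_le_add ih (mul_le_mul_of_nonneg_left ?_ (opNormSub_nonneg _ _))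
            exact n2_iter_le hWm hWb hx k
        _ = (k+1 : ℕ) * graphonOpNormSub W' W * n2 x := by push_cast; ring

end GNDE
noncomputable section GNDEProof4
namespace GNDE
open MeasureTheory Filter Set
open scoped ENNReal NNReal

variable {ρ : ℝ → ℝ} {W W' : ℝ → ℝ → ℝ}

lemma rho_cont (hρ : NormalizedLipschitz ρ) : Continuous ρ := by
  have : LipschitzWith 1 ρ := by
    refine LipschitzWith.of_dist_le_mul fun a b => ?_
    rw [Real.dist_eq, Real.dist_eq, NNReal.coe_one, one_mul]
    exact hρ.1 a b
  exact this.continuous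

lemma rho_abs_le (hρ : NormalizedLipschitz ρ) (s : ℝ) : |ρ s| ≤ |s| := by
  have := hρ.1 s 0
  rwa [hρ.2, sub_zero, sub_zero] at this

lemma memℒp_rho {a : ℝ → ℝ} (hρ : NormalizedLipschitz ρ) (ha : MemLp a 2 μI) :
    MemLp (fun u => ρ (a u)) 2 μI := by
  refine MemLp.of_le ha ((rho_cont hρ).comp_aestronglyMeasurable ha.aestronglyMeasurable) ?_
  filter_upwards with u
  simpa [Real.norm_eq_abs] using rho_abs_le hρ (a u)

lemma n2_abs (a : ℝ → ℝ) : n2 (fun u => |a u|) = n2 a := by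
  rw [n2, n2]
  congr 1
  simpa [Real.norm_eq_abs] using eLpNorm_norm (p := 2) (μ := μI) a

lemma n2_rho_sub {a b : ℝ → ℝ} (hρ : NormalizedLipschitz ρ)
    (hab : MemLp (fun u => a u - b u) 2 μI) :
    n2 (fun u => ρ (a u) - ρ (b u)) ≤ n2 (fun u => a u - b u) := by
  have h1 : eLpNorm (fun u => ρ (a u) - ρ (b u)) 2 μI
      ≤ eLpNorm (fun u => |a u - b u|) 2 μI := by
    refine eLpNorm_mono_real fun u => ?_
    rw [Real.norm_eq_abs]
    exact hρ.1 (a u) (b u)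
  have habs : MemLp (fun u => |a u - b u|) 2 μI := by
    rw [show (fun u => |a u - b u|) = fun u => ‖a u - b u‖ by funext u; rw [Real.norm_eq_abs]]
    exact hab.norm
  have := n2_mono_e habs h1
  rwa [n2_abs] at this

lemma n2_rho_le {a : ℝ → ℝ} (hρ : NormalizedLipschitz ρ) (ha : MemLp a 2 μI) :
    n2 (fun u => ρ (a u)) ≤ n2 a := by
  have h1 : eLpNorm (fun u => ρ (a u)) 2 μI ≤ eLpNorm (fun u => |a u|) 2 μI := by
    refine eLpNorm_mono_real fun u => ?_
    rw [Real.norm_eq_abs]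
    exact rho_abs_le hρ (a u)
  have habs : MemLp (fun u => |a u|) 2 μI := by
    rw [show (fun u => |a u|) = fun u => ‖a u‖ by funext u; rw [Real.norm_eq_abs]]
    exact ha.norm
  have := n2_mono_e habs h1
  rwa [n2_abs] at this

lemma n2_sum_le {ι : Type*} (s : Finset ι) (f : ι → ℝ → ℝ)
    (hf : ∀ i ∈ s, MemLp (f i) 2 μI) :
    n2 (fun u => ∑ i ∈ s, f i u) ≤ ∑ i ∈ s, n2 (f i) := by
  classical
  induction s using Finset.induction with
  | empty => simp [n2]
  | insert j s' hni ih =>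
      rw [Finset.sum_insert hni]
      have hmem : ∀ i ∈ s', MemLp (f i) 2 μI := fun i hi => hf i (Finset.mem_insert_of_mem hi)
      have hsum : MemLp (fun u => ∑ i ∈ s', f i u) 2 μI := by
        have := memLp_finset_sum' (μ := μI) (p := 2) s' hmem
        convert this using 1
        funext u
        simp
      calc n2 (fun u => ∑ i ∈ Insert.insert j s', f i u)
          = n2 (fun u => f j u + ∑ i ∈ s', f i u) := by
            congr 1; funext u; rw [Finset.sum_insert hni]
        _ ≤ n2 (f j) + n2 (fun u => ∑ i ∈ s', f i u) :=
            n2_triangle (hf j (Finset.mem_insert_self _ _)) hsum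
        _ ≤ n2 (f j) + ∑ i ∈ s', n2 (f i) := add_le_add le_rfl (ih hmem)

lemma n2_const_mul (c : ℝ) (f : ℝ → ℝ) : n2 (fun u => c * f u) = |c| * n2 f := by
  rw [n2, n2, show (fun u => c * f u) = c • f by funext u; simp,
    eLpNorm_const_smul, ENNReal.toReal_mul]
  simp [Real.norm_eq_abs]

end GNDE
noncomputable section GNDEProof5
namespace GNDE
open MeasureTheory Filter Set
open scoped ENNReal NNReal

variable {F K : ℕ} {ρ : ℝ → ℝ} {W W' : ℝ → ℝ → ℝ} {M : ℝ}

/-- All components in L². -/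
def Good (F : ℕ) (X : Fin F → ℝ → ℝ) : Prop := ∀ f, MemLp (X f) 2 μI

/-- ℓ¹-type sum of L² norms. -/
def SS (F : ℕ) (X : Fin F → ℝ → ℝ) : ℝ := ∑ f, n2 (X f)

/-- sum of L² norms of differences. -/
def SSd (F : ℕ) (X Y : Fin F → ℝ → ℝ) : ℝ := ∑ f, n2 (fun u => X f u - Y f u)

lemma SS_nonneg (F : ℕ) (X : Fin F → ℝ → ℝ) : 0 ≤ SS F X :=
  Finset.sum_nonneg fun _ _ => n2_nonneg _

lemma SSd_nonneg (F : ℕ) (X Y : Fin F → ℝ → ℝ) : 0 ≤ SSd F X Y :=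
  Finset.sum_nonneg fun _ _ => n2_nonneg _

lemma n2_le_SS (X : Fin F → ℝ → ℝ) (f : Fin F) : n2 (X f) ≤ SS F X :=
  Finset.single_le_sum (f := fun f => n2 (X f)) (fun _ _ => n2_nonneg _) (Finset.mem_univ f)

lemma SSd_triangle {X Y Z : Fin F → ℝ → ℝ} (hX : Good F X) (hY : Good F Y) (hZ : Good F Z) :
    SSd F X Z ≤ SSd F X Y + SSd F Y Z := by
  rw [SSd, SSd, SSd, ← Finset.sum_add_distrib]
  refine Finset.sum_le_sum fun f _ => ?_
  have : (fun u => X f u - Z f u) = fun u => (X f u - Y f u) + (Y f u - Z f u) := by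
    funext u; ring
  rw [this]
  exact n2_triangle ((hX f).sub (hY f)) ((hY f).sub (hZ f))

section Layer

set_option maxHeartbeats 1000000

variable (hρ : NormalizedLipschitz ρ)
variable (hWm : Measurable (Function.uncurry W)) (hWb : ∀ u v, |W u v| ≤ 1)
variable (hW'm : Measurable (Function.uncurry W')) (hW'b : ∀ u v, |W' u v| ≤ 1)

include hWm hWb in
/-- MemLp of the pre-activation sum. -/
lemma inner_memℒp (h : Fin F → Fin F → Fin K → ℝ) {X : Fin F → ℝ → ℝ} (hX : Good F X)
    (f : Fin F) :
    MemLp (fun u => ∑ g : Fin F, ∑ k : Fin K, h f g k * graphonIter W (k : ℕ) (X g) u) 2 μI := by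
  have : ∀ g : Fin F, MemLp (fun u => ∑ k : Fin K, h f g k * graphonIter W (k : ℕ) (X g) u) 2 μI := by
    intro g
    have := memLp_finset_sum' (μ := μI) (p := 2) Finset.univ
      (f := fun k : Fin K => fun u => h f g k * graphonIter W (k : ℕ) (X g) u)
      (fun k _ => (graphonIter_memℒp hWm hWb (hX g) k).const_mul _)
    convert this using 1
    funext u; simp
  have := memLp_finset_sum' (μ := μI) (p := 2) Finset.univ
    (f := fun g : Fin F => fun u => ∑ k : Fin K, h f g k * graphonIter W (k : ℕ) (X g) u)
    (fun g _ => this g)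
  convert this using 1
  funext u; simp

include hρ hWm hWb in
lemma layer_good (h : Fin F → Fin F → Fin K → ℝ) {X : Fin F → ℝ → ℝ} (hX : Good F X) :
    Good F (gnnLayer F K W ρ h X) := by
  intro f
  show MemLp (fun u => ρ (∑ g : Fin F, ∑ k : Fin K, h f g k * graphonIter W (k : ℕ) (X g) u)) 2 μI
  exact memℒp_rho hρ (inner_memℒp hWm hWb h hX f)

include hρ hWm hWb in
lemma layer_SS_le (h : Fin F → Fin F → Fin K → ℝ) (hM : ∀ f g k, |h f g k| ≤ M)
    {X : Fin F → ℝ → ℝ} (hX : Good F X) :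
    SS F (gnnLayer F K W ρ h X) ≤ (F * K * M) * SS F X := by
  have hcomp : ∀ f : Fin F, n2 (gnnLayer F K W ρ h X f) ≤ (K * M) * SS F X := by
    intro f
    show n2 (fun u => ρ (∑ g : Fin F, ∑ k : Fin K, h f g k * graphonIter W (k : ℕ) (X g) u))
      ≤ (K * M) * SS F X
    have h1 : n2 (fun u => ρ (∑ g : Fin F, ∑ k : Fin K, h f g k * graphonIter W (k : ℕ) (X g) u))
        ≤ n2 (fun u => ∑ g : Fin F, ∑ k : Fin K, h f g k * graphonIter W (k : ℕ) (X g) u) :=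
      n2_rho_le (a := fun u => ∑ g : Fin F, ∑ k : Fin K, h f g k * graphonIter W (k : ℕ) (X g) u)
        hρ (inner_memℒp hWm hWb h hX f)
    refine h1.trans ?_
    calc n2 (fun u => ∑ g : Fin F, ∑ k : Fin K, h f g k * graphonIter W (k : ℕ) (X g) u)
        ≤ ∑ g : Fin F, n2 (fun u => ∑ k : Fin K, h f g k * graphonIter W (k : ℕ) (X g) u) := by
          refine n2_sum_le Finset.univ _ fun g _ => ?_
          have := memLp_finset_sum' (μ := μI) (p := 2) Finset.univ
            (f := fun k : Fin K => fun u => h f g k * graphonIter W (k : ℕ) (X g) u)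
            (fun k _ => (graphonIter_memℒp hWm hWb (hX g) k).const_mul _)
          convert this using 1
          funext u; simp
      _ ≤ ∑ g : Fin F, ∑ k : Fin K, n2 (fun u => h f g k * graphonIter W (k : ℕ) (X g) u) := by
          refine Finset.sum_le_sum fun g _ => ?_
          exact n2_sum_le Finset.univ _ fun k _ =>
            (graphonIter_memℒp hWm hWb (hX g) k).const_mul _
      _ ≤ ∑ g : Fin F, ∑ _k : Fin K, M * n2 (X g) := by
          refine Finset.sum_le_sum fun g _ => Finset.sum_le_sum fun k _ => ?_
          rw [n2_const_mul]
          exact mul_le_mul (hM f g k) (n2_iter_le hWm hWb (hX g) k) (n2_nonneg _)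
            ((abs_nonneg _).trans (hM f g k))
      _ = (K * M) * SS F X := by
          rw [SS, Finset.mul_sum]
          refine Finset.sum_congr rfl fun g _ => ?_
          rw [Finset.sum_const, Finset.card_univ, Fintype.card_fin, nsmul_eq_mul]
          ring
  calc SS F (gnnLayer F K W ρ h X) ≤ ∑ _f : Fin F, (K * M) * SS F X :=
        Finset.sum_le_sum fun f _ => hcomp f
    _ = (F * K * M) * SS F X := by
        simp only [Finset.sum_const, Finset.card_univ, Fintype.card_fin, nsmul_eq_mul]
        ring

include hρ hWm hWb in
lemma layer_lip (h : Fin F → Fin F → Fin K → ℝ) (hM : ∀ f g k, |h f g k| ≤ M)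
    {X Y : Fin F → ℝ → ℝ} (hX : Good F X) (hY : Good F Y) :
    SSd F (gnnLayer F K W ρ h X) (gnnLayer F K W ρ h Y) ≤ (F * K * M) * SSd F X Y := by
  have hcomp : ∀ f : Fin F, n2 (fun u => gnnLayer F K W ρ h X f u - gnnLayer F K W ρ h Y f u)
      ≤ (K * M) * SSd F X Y := by
    intro f
    show n2 (fun u => ρ (∑ g : Fin F, ∑ k : Fin K, h f g k * graphonIter W (k : ℕ) (X g) u)
        - ρ (∑ g : Fin F, ∑ k : Fin K, h f g k * graphonIter W (k : ℕ) (Y g) u))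
      ≤ (K * M) * SSd F X Y
    have hd : (fun u => (∑ g : Fin F, ∑ k : Fin K, h f g k * graphonIter W (k : ℕ) (X g) u)
        - (∑ g : Fin F, ∑ k : Fin K, h f g k * graphonIter W (k : ℕ) (Y g) u))
        = fun u => ∑ g : Fin F, ∑ k : Fin K,
            h f g k * (graphonIter W (k : ℕ) (X g) u - graphonIter W (k : ℕ) (Y g) u) := by
      funext u
      rw [← Finset.sum_sub_distrib]
      refine Finset.sum_congr rfl fun g _ => ?_
      rw [← Finset.sum_sub_distrib]
      refine Finset.sum_congr rfl fun k _ => ?_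
      ring
    have hmem2 : ∀ (g : Fin F) (k : Fin K), MemLp
        (fun u => h f g k * (graphonIter W (k : ℕ) (X g) u - graphonIter W (k : ℕ) (Y g) u)) 2 μI :=
      fun g k => (((graphonIter_memℒp hWm hWb (hX g) k).sub
        (graphonIter_memℒp hWm hWb (hY g) k))).const_mul _
    have hg2 : ∀ g : Fin F, MemLp (fun u => ∑ k : Fin K,
        h f g k * (graphonIter W (k : ℕ) (X g) u - graphonIter W (k : ℕ) (Y g) u)) 2 μI := by
      intro g
      have := memLp_finset_sum' (μ := μI) (p := 2) Finset.univ (fun k _ => hmem2 g k)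
      convert this using 1
      funext u; simp
    have hmemd : MemLp (fun u => (∑ g : Fin F, ∑ k : Fin K, h f g k * graphonIter W (k : ℕ) (X g) u)
        - (∑ g : Fin F, ∑ k : Fin K, h f g k * graphonIter W (k : ℕ) (Y g) u)) 2 μI := by
      rw [hd]
      have := memLp_finset_sum' (μ := μI) (p := 2) Finset.univ (fun g _ => hg2 g)
      convert this using 1
      funext u; simp
    have h1 := n2_rho_sub (ρ := ρ)
      (a := fun u => ∑ g : Fin F, ∑ k : Fin K, h f g k * graphonIter W (k : ℕ) (X g) u)
      (b := fun u => ∑ g : Fin F, ∑ k : Fin K, h f g k * graphonIter W (k : ℕ) (Y g) u)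
      hρ hmemd
    rw [hd] at h1
    refine h1.trans ?_
    calc n2 (fun u => ∑ g : Fin F, ∑ k : Fin K,
            h f g k * (graphonIter W (k : ℕ) (X g) u - graphonIter W (k : ℕ) (Y g) u))
        ≤ ∑ g : Fin F, n2 (fun u => ∑ k : Fin K,
            h f g k * (graphonIter W (k : ℕ) (X g) u - graphonIter W (k : ℕ) (Y g) u)) :=
          n2_sum_le Finset.univ _ fun g _ => hg2 g
      _ ≤ ∑ g : Fin F, ∑ k : Fin K, n2 (fun u =>
            h f g k * (graphonIter W (k : ℕ) (X g) u - graphonIter W (k : ℕ) (Y g) u)) :=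
          Finset.sum_le_sum fun g _ => n2_sum_le Finset.univ _ fun k _ => hmem2 g k
      _ ≤ ∑ g : Fin F, ∑ _k : Fin K, M * n2 (fun u => X g u - Y g u) := by
          refine Finset.sum_le_sum fun g _ => Finset.sum_le_sum fun k _ => ?_
          rw [n2_const_mul]
          exact mul_le_mul (hM f g k) (n2_iter_sub_le hWm hWb (hX g) (hY g) k) (n2_nonneg _)
            ((abs_nonneg _).trans (hM f g k))
      _ = (K * M) * SSd F X Y := by
          rw [SSd, Finset.mul_sum]
          refine Finset.sum_congr rfl fun g _ => ?_
          rw [Finset.sum_const, Finset.card_univ, Fintype.card_fin, nsmul_eq_mul]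
          ring
  calc SSd F (gnnLayer F K W ρ h X) (gnnLayer F K W ρ h Y)
      ≤ ∑ _f : Fin F, (K * M) * SSd F X Y := Finset.sum_le_sum fun f _ => hcomp f
    _ = (F * K * M) * SSd F X Y := by
        simp only [Finset.sum_const, Finset.card_univ, Fintype.card_fin, nsmul_eq_mul]
        ring

include hρ hWm hWb hW'm hW'b in
lemma layer_pert (h : Fin F → Fin F → Fin K → ℝ) (hM : ∀ f g k, |h f g k| ≤ M)
    {X : Fin F → ℝ → ℝ} (hX : Good F X) :
    SSd F (gnnLayer F K W' ρ h X) (gnnLayer F K W ρ h X)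
      ≤ (F * K * M) * (K * graphonOpNormSub W' W) * SS F X := by
  set ε := graphonOpNormSub W' W with hε
  have hε0 : 0 ≤ ε := opNormSub_nonneg _ _
  have hcomp : ∀ f : Fin F, n2 (fun u => gnnLayer F K W' ρ h X f u - gnnLayer F K W ρ h X f u)
      ≤ (K * M) * (K * ε) * SS F X := by
    intro f
    show n2 (fun u => ρ (∑ g : Fin F, ∑ k : Fin K, h f g k * graphonIter W' (k : ℕ) (X g) u)
        - ρ (∑ g : Fin F, ∑ k : Fin K, h f g k * graphonIter W (k : ℕ) (X g) u))
      ≤ (K * M) * (K * ε) * SS F X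
    have hd : (fun u => (∑ g : Fin F, ∑ k : Fin K, h f g k * graphonIter W' (k : ℕ) (X g) u)
        - (∑ g : Fin F, ∑ k : Fin K, h f g k * graphonIter W (k : ℕ) (X g) u))
        = fun u => ∑ g : Fin F, ∑ k : Fin K,
            h f g k * (graphonIter W' (k : ℕ) (X g) u - graphonIter W (k : ℕ) (X g) u) := by
      funext u
      rw [← Finset.sum_sub_distrib]
      refine Finset.sum_congr rfl fun g _ => ?_
      rw [← Finset.sum_sub_distrib]
      refine Finset.sum_congr rfl fun k _ => ?_
      ring
    have hmem2 : ∀ (g : Fin F) (k : Fin K), MemLp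
        (fun u => h f g k * (graphonIter W' (k : ℕ) (X g) u - graphonIter W (k : ℕ) (X g) u)) 2 μI :=
      fun g k => (((graphonIter_memℒp hW'm hW'b (hX g) k).sub
        (graphonIter_memℒp hWm hWb (hX g) k))).const_mul _
    have hg2 : ∀ g : Fin F, MemLp (fun u => ∑ k : Fin K,
        h f g k * (graphonIter W' (k : ℕ) (X g) u - graphonIter W (k : ℕ) (X g) u)) 2 μI := by
      intro g
      have := memLp_finset_sum' (μ := μI) (p := 2) Finset.univ (fun k _ => hmem2 g k)
      convert this using 1
      funext u; simp
    have hmemd : MemLp (fun u => (∑ g : Fin F, ∑ k : Fin K, h f g k * graphonIter W' (k : ℕ) (X g) u)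
        - (∑ g : Fin F, ∑ k : Fin K, h f g k * graphonIter W (k : ℕ) (X g) u)) 2 μI := by
      rw [hd]
      have := memLp_finset_sum' (μ := μI) (p := 2) Finset.univ (fun g _ => hg2 g)
      convert this using 1
      funext u; simp
    have h1 := n2_rho_sub (ρ := ρ)
      (a := fun u => ∑ g : Fin F, ∑ k : Fin K, h f g k * graphonIter W' (k : ℕ) (X g) u)
      (b := fun u => ∑ g : Fin F, ∑ k : Fin K, h f g k * graphonIter W (k : ℕ) (X g) u)
      hρ hmemd
    rw [hd] at h1
    refine h1.trans ?_
    calc n2 (fun u => ∑ g : Fin F, ∑ k : Fin K,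
            h f g k * (graphonIter W' (k : ℕ) (X g) u - graphonIter W (k : ℕ) (X g) u))
        ≤ ∑ g : Fin F, n2 (fun u => ∑ k : Fin K,
            h f g k * (graphonIter W' (k : ℕ) (X g) u - graphonIter W (k : ℕ) (X g) u)) :=
          n2_sum_le Finset.univ _ fun g _ => hg2 g
      _ ≤ ∑ g : Fin F, ∑ k : Fin K, n2 (fun u =>
            h f g k * (graphonIter W' (k : ℕ) (X g) u - graphonIter W (k : ℕ) (X g) u)) :=
          Finset.sum_le_sum fun g _ => n2_sum_le Finset.univ _ fun k _ => hmem2 g k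
      _ ≤ ∑ g : Fin F, ∑ _k : Fin K, M * (K * ε * n2 (X g)) := by
          refine Finset.sum_le_sum fun g _ => Finset.sum_le_sum fun k _ => ?_
          rw [n2_const_mul]
          refine mul_le_mul (hM f g k) ?_ (n2_nonneg _) ((abs_nonneg _).trans (hM f g k))
          refine (n2_iter_kernel_sub hWm hWb hW'm hW'b (hX g) (k : ℕ)).trans ?_
          refine mul_le_mul_of_nonneg_right (mul_le_mul_of_nonneg_right ?_ hε0) (n2_nonneg _)
          exact_mod_cast le_of_lt (Fin.is_lt k)
      _ = (K * M) * (K * ε) * SS F X := by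
          rw [SS, Finset.mul_sum]
          refine Finset.sum_congr rfl fun g _ => ?_
          rw [Finset.sum_const, Finset.card_univ, Fintype.card_fin, nsmul_eq_mul]
          ring
  calc SSd F (gnnLayer F K W' ρ h X) (gnnLayer F K W ρ h X)
      ≤ ∑ _f : Fin F, (K * M) * (K * ε) * SS F X := Finset.sum_le_sum fun f _ => hcomp f
    _ = (F * K * M) * (K * ε) * SS F X := by
        simp only [Finset.sum_const, Finset.card_univ, Fintype.card_fin, nsmul_eq_mul]
        ring

end Layer

end GNDE
noncomputable section GNDEProof6
namespace GNDE
open MeasureTheory Filter Set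
open scoped ENNReal NNReal

variable {F K : ℕ} {ρ : ℝ → ℝ} {W W' : ℝ → ℝ → ℝ} {M : ℝ}

/-- Iterated layers. -/
def fold (F K : ℕ) (W : ℝ → ℝ → ℝ) (ρ : ℝ → ℝ)
    (hs : List (Fin F → Fin F → Fin K → ℝ)) (X : Fin F → ℝ → ℝ) : Fin F → ℝ → ℝ :=
  hs.foldl (fun Y hl => gnnLayer F K W ρ hl Y) X

lemma gnn_eq_fold (L : ℕ) (h : Fin L → Fin F → Fin F → Fin K → ℝ) (X : Fin F → ℝ → ℝ) :
    gnn F K L W ρ h X = fold F K W ρ (List.ofFn h) X := rfl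

lemma fold_nil (X : Fin F → ℝ → ℝ) : fold F K W ρ [] X = X := rfl

lemma fold_cons (hl : Fin F → Fin F → Fin K → ℝ) (hs : List (Fin F → Fin F → Fin K → ℝ))
    (X : Fin F → ℝ → ℝ) :
    fold F K W ρ (hl :: hs) X = fold F K W ρ hs (gnnLayer F K W ρ hl X) := rfl

variable (hρ : NormalizedLipschitz ρ)
variable (hWm : Measurable (Function.uncurry W)) (hWb : ∀ u v, |W u v| ≤ 1)
variable (hW'm : Measurable (Function.uncurry W')) (hW'b : ∀ u v, |W' u v| ≤ 1)

include hρ hWm hWb in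
lemma fold_good (hs : List (Fin F → Fin F → Fin K → ℝ)) {X : Fin F → ℝ → ℝ} (hX : Good F X) :
    Good F (fold F K W ρ hs X) := by
  induction hs generalizing X with
  | nil => exact hX
  | cons hl t ih => rw [fold_cons]; exact ih (layer_good hρ hWm hWb hl hX)

include hρ hWm hWb in
lemma fold_SS (hM0 : 0 ≤ M) (hs : List (Fin F → Fin F → Fin K → ℝ))
    (hhs : ∀ hl ∈ hs, ∀ f g k, |hl f g k| ≤ M) {X : Fin F → ℝ → ℝ} (hX : Good F X) :
    SS F (fold F K W ρ hs X) ≤ (F * K * M + 1) ^ hs.length * SS F X := by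
  set B : ℝ := F * K * M + 1 with hBdef
  have hB1 : (1:ℝ) ≤ B := by
    rw [hBdef]
    have : (0:ℝ) ≤ F * K * M := by positivity
    linarith
  have hB0 : (0:ℝ) ≤ B := by linarith
  induction hs generalizing X with
  | nil => simp [fold_nil]
  | cons hl t ih =>
      rw [fold_cons, List.length_cons]
      have h1 := ih (fun l hlmem => hhs l (List.mem_cons_of_mem _ hlmem))
        (layer_good hρ hWm hWb hl hX)
      refine h1.trans ?_
      have h2 := layer_SS_le hρ hWm hWb hl (hhs hl (List.mem_cons_self)) hX
      calc B ^ t.length * SS F (gnnLayer F K W ρ hl X)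
          ≤ B ^ t.length * ((F * K * M) * SS F X) := by
            exact mul_le_mul_of_nonneg_left h2 (by positivity)
        _ ≤ B ^ t.length * (B * SS F X) := by
            refine mul_le_mul_of_nonneg_left ?_ (by positivity)
            exact mul_le_mul_of_nonneg_right (by rw [hBdef]; linarith) (SS_nonneg F X)
        _ = B ^ (t.length + 1) * SS F X := by ring

include hρ hWm hWb hW'm hW'b in
lemma fold_pert_lip (hM0 : 0 ≤ M) (hs : List (Fin F → Fin F → Fin K → ℝ))
    (hhs : ∀ hl ∈ hs, ∀ f g k, |hl f g k| ≤ M) {X X' : Fin F → ℝ → ℝ}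
    (hX : Good F X) (hX' : Good F X') :
    SSd F (fold F K W' ρ hs X') (fold F K W ρ hs X)
      ≤ (F * K * M + 1) ^ hs.length * SSd F X' X
        + hs.length * (F * K * M + 1) ^ hs.length
          * (K * graphonOpNormSub W' W) * SS F X := by
  set B : ℝ := F * K * M + 1 with hBdef
  have hB1 : (1:ℝ) ≤ B := by
    rw [hBdef]
    have : (0:ℝ) ≤ F * K * M := by positivity
    linarith
  have hB0 : (0:ℝ) ≤ B := by linarith
  set ε := graphonOpNormSub W' W with hεdef
  have hε0 : 0 ≤ ε := opNormSub_nonneg _ _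
  have hKε0 : 0 ≤ (K:ℝ) * ε := by positivity
  induction hs generalizing X X' with
  | nil => simp [fold_nil]
  | cons hl t ih =>
      rw [fold_cons, fold_cons, List.length_cons]
      have hMb := hhs hl (List.mem_cons_self)
      have hht := fun l hlmem => hhs l (List.mem_cons_of_mem _ hlmem)
      have hgX : Good F (gnnLayer F K W ρ hl X) := layer_good hρ hWm hWb hl hX
      have hgX'W' : Good F (gnnLayer F K W' ρ hl X') := layer_good hρ hW'm hW'b hl hX'
      have hgXW' : Good F (gnnLayer F K W' ρ hl X) := layer_good hρ hW'm hW'b hl hX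
      have hIH := ih hht hgX hgX'W'
      refine hIH.trans ?_
      have hlip := layer_lip hρ hW'm hW'b hl hMb hX' hX
      have hpert := layer_pert hρ hWm hWb hW'm hW'b hl hMb hX
      have htri : SSd F (gnnLayer F K W' ρ hl X') (gnnLayer F K W ρ hl X)
          ≤ SSd F (gnnLayer F K W' ρ hl X') (gnnLayer F K W' ρ hl X)
            + SSd F (gnnLayer F K W' ρ hl X) (gnnLayer F K W ρ hl X) :=
        SSd_triangle hgX'W' hgXW' hgX
      have hSSl := layer_SS_le hρ hWm hWb hl hMb hX
      have hFKM : F * K * M ≤ B := by rw [hBdef]; linarith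
      have key1 : SSd F (gnnLayer F K W' ρ hl X') (gnnLayer F K W ρ hl X)
          ≤ B * SSd F X' X + B * (K * ε) * SS F X := by
        refine htri.trans ?_
        refine add_le_add (hlip.trans ?_) (hpert.trans ?_)
        · exact mul_le_mul_of_nonneg_right hFKM (SSd_nonneg _ _ _)
        · exact mul_le_mul_of_nonneg_right
            (mul_le_mul_of_nonneg_right hFKM hKε0) (SS_nonneg _ _)
      calc B ^ t.length * SSd F (gnnLayer F K W' ρ hl X') (gnnLayer F K W ρ hl X)
            + t.length * B ^ t.length * (K * ε) * SS F (gnnLayer F K W ρ hl X)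
          ≤ B ^ t.length * (B * SSd F X' X + B * (K * ε) * SS F X)
            + t.length * B ^ t.length * (K * ε) * ((F * K * M) * SS F X) := by
            refine add_le_add (mul_le_mul_of_nonneg_left key1 (by positivity)) ?_
            exact mul_le_mul_of_nonneg_left hSSl (by positivity)
        _ ≤ B ^ t.length * (B * SSd F X' X + B * (K * ε) * SS F X)
            + t.length * B ^ t.length * (K * ε) * (B * SS F X) := by
            refine add_le_add le_rfl (mul_le_mul_of_nonneg_left ?_ (by positivity))
            exact mul_le_mul_of_nonneg_right hFKM (SS_nonneg _ _)
        _ = B ^ (t.length + 1) * SSd F X' X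
            + (t.length * B ^ (t.length + 1) * (K * ε) + B ^ (t.length + 1) * (K * ε)) * SS F X := by
            ring
        _ = (t.length + 1 : ℕ) * B ^ (t.length + 1) * (K * ε) * SS F X
            + B ^ (t.length + 1) * SSd F X' X := by push_cast; ring
        _ = B ^ (t.length + 1) * SSd F X' X
            + (t.length + 1 : ℕ) * B ^ (t.length + 1) * (K * ε) * SS F X := by ring

end GNDE
noncomputable section GNDEProof7
namespace GNDE
open MeasureTheory Filter Set
open scoped ENNReal NNReal

/-- inclusion L∞ ⊆ L² as a linear map. -/
def inclL : Lp ℝ ⊤ μI →ₗ[ℝ] Lp ℝ 2 μI where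
  toFun x := ((Lp.memLp x).mono_exponent le_top).toLp x
  map_add' x y := by
    rw [← MemLp.toLp_add]
    exact MemLp.toLp_congr _ _ (Lp.coeFn_add x y)
  map_smul' c x := by
    rw [RingHom.id_apply]
    have h1 : MemLp (c • (x : ℝ → ℝ)) 2 μI :=
      ((Lp.memLp x).mono_exponent le_top).const_smul c
    have h2 := MemLp.toLp_congr ((Lp.memLp (c • x)).mono_exponent le_top) h1
      (Lp.coeFn_smul c x)
    show ((Lp.memLp (c • x)).mono_exponent le_top).toLp _ = _
    rw [h2, MemLp.toLp_const_smul]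

lemma inclL_norm (x : Lp ℝ ⊤ μI) : ‖inclL x‖ ≤ ‖x‖ := by
  show ‖MemLp.toLp (x : ℝ → ℝ) ((Lp.memLp x).mono_exponent le_top)‖ ≤ ‖x‖
  rw [Lp.norm_toLp, Lp.norm_def]
  exact ENNReal.toReal_mono (Lp.eLpNorm_ne_top x)
    (eLpNorm_le_eLpNorm_of_exponent_le le_top (Lp.aestronglyMeasurable x))

/-- inclusion L∞ ⊆ L² as a continuous linear map. -/
def incl : Lp ℝ ⊤ μI →L[ℝ] Lp ℝ 2 μI :=
  LinearMap.mkContinuous inclL 1 (fun x => by rw [one_mul]; exact inclL_norm x)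

lemma incl_coeFn (x : Lp ℝ ⊤ μI) : (incl x : ℝ → ℝ) =ᵐ[μI] x :=
  MemLp.coeFn_toLp ((Lp.memLp x).mono_exponent le_top)

/-- the target space `L²(I;ℝ^F)`. -/
abbrev EE (F : ℕ) := PiLp 2 (fun _ : Fin F => Lp ℝ 2 μI)

/-- inclusion `L^∞(I;ℝ^F) → L²(I;ℝ^F)`. -/
def iota (F : ℕ) : (Fin F → Lp ℝ ⊤ μI) →L[ℝ] EE F :=
  (PiLp.continuousLinearEquiv 2 ℝ (fun _ : Fin F => Lp ℝ 2 μI)).symm.toContinuousLinearMap.comp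
    (ContinuousLinearMap.pi (fun f => incl.comp (ContinuousLinearMap.proj f)))

lemma iota_apply {F : ℕ} (A : Fin F → Lp ℝ ⊤ μI) (f : Fin F) : iota F A f = incl (A f) := rfl

lemma EE_norm_eq {F : ℕ} (y : EE F) : ‖y‖ = Real.sqrt (∑ f, ‖y f‖ ^ 2) := by
  rw [PiLp.norm_eq_sum (by norm_num : 0 < (2:ℝ≥0∞).toReal), Real.sqrt_eq_rpow]
  norm_num

lemma iota_sub_apply_norm {F : ℕ} (A B : Fin F → Lp ℝ ⊤ μI) (f : Fin F) :
    ‖(iota F A - iota F B) f‖ = n2 (fun u => (A f : ℝ → ℝ) u - (B f : ℝ → ℝ) u) := by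
  have h1 : (iota F A - iota F B) f = incl (A f) - incl (B f) := rfl
  rw [h1, Lp.norm_def, n2]
  congr 1
  refine eLpNorm_congr_ae ?_
  filter_upwards [Lp.coeFn_sub (incl (A f)) (incl (B f)), incl_coeFn (A f), incl_coeFn (B f)]
    with u h1 h2 h3
  rw [h1, Pi.sub_apply, h2, h3]

lemma vecLpNorm_nonneg (F : ℕ) (p : ℝ≥0∞) (X : Fin F → ℝ → ℝ) : 0 ≤ vecLpNorm F p X :=
  Real.sqrt_nonneg _

lemma vecLpNorm_congr {F : ℕ} {A B : Fin F → ℝ → ℝ} (h : ∀ f, A f =ᵐ[μI] B f) :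
    vecLpNorm F 2 A = vecLpNorm F 2 B := by
  rw [vecLpNorm, vecLpNorm]
  congr 1
  refine Finset.sum_congr rfl fun f _ => ?_
  rw [eLpNorm_congr_ae (h f)]

/-- the key identification of `vecLpNorm` of a difference with the `EE` norm. -/
lemma iota_norm_sub {F : ℕ} (A B : Fin F → Lp ℝ ⊤ μI) :
    ‖iota F A - iota F B‖ = vecLpNorm F 2 (fun f u => (A f : ℝ → ℝ) u - (B f : ℝ → ℝ) u) := by
  rw [EE_norm_eq, vecLpNorm]
  congr 1
  refine Finset.sum_congr rfl fun f _ => ?_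
  congr 1
  have h1 : (iota F A - iota F B) f = incl (A f) - incl (B f) := rfl
  rw [h1, Lp.norm_def]
  congr 1
  refine eLpNorm_congr_ae ?_
  filter_upwards [Lp.coeFn_sub (incl (A f)) (incl (B f)), incl_coeFn (A f), incl_coeFn (B f)]
    with u h1 h2 h3
  rw [h1, Pi.sub_apply, h2, h3]

lemma EE_norm_le_sum {F : ℕ} (y : EE F) : ‖y‖ ≤ ∑ f, ‖y f‖ := by
  rw [EE_norm_eq]
  have h1 : ∑ f, ‖y f‖ ^ 2 ≤ (∑ f, ‖y f‖) ^ 2 :=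
    Finset.sum_sq_le_sq_sum_of_nonneg fun i _ => norm_nonneg _
  calc Real.sqrt (∑ f, ‖y f‖ ^ 2) ≤ Real.sqrt ((∑ f, ‖y f‖) ^ 2) := Real.sqrt_le_sqrt h1
    _ = ∑ f, ‖y f‖ := Real.sqrt_sq (Finset.sum_nonneg fun _ _ => norm_nonneg _)

lemma sum_norm_le_sqrt {F : ℕ} (y : EE F) : ∑ f, ‖y f‖ ≤ Real.sqrt F * ‖y‖ := by
  rw [EE_norm_eq, ← Real.sqrt_mul (by positivity : (0:ℝ) ≤ (F:ℝ))]
  have hcs := Finset.sum_mul_sq_le_sq_mul_sq Finset.univ (fun _ : Fin F => (1:ℝ))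
    (fun f => ‖y f‖)
  simp only [one_pow, one_mul, Finset.sum_const, Finset.card_univ, Fintype.card_fin,
    nsmul_eq_mul, mul_one] at hcs
  have h0 : 0 ≤ ∑ f, ‖y f‖ := Finset.sum_nonneg fun _ _ => norm_nonneg _
  exact (Real.le_sqrt h0 (by positivity)).2 hcs

end GNDE

open MeasureTheory Filter Set GNDE in
/-- **Trajectory-wise convergence.**
If `‖T_{Wₙ} − T_W‖_{L²→L²} → 0` and `‖Zₙ − Z‖_{L²(I;ℝ^F)} → 0`, then the solutions `Xₙ` of the
Graphon-NDEs with data `(Wₙ, Zₙ)` converge to the solution `X` with data `(W, Z)` uniformly in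
time: `sup_{t∈[0,T]} ‖Xₙ(t) − X(t)‖_{L²(I;ℝ^F)} → 0`. -/
theorem graphonNDE_trajectory_convergence
    (F K L : ℕ) (hF : 1 ≤ F) (hK : 1 ≤ K) (hL : 1 ≤ L)
    (ρ : ℝ → ℝ) (hρ : NormalizedLipschitz ρ)
    (T : ℝ) (hT : 0 < T)
    (H : ℝ → Fin L → Fin F → Fin F → Fin K → ℝ)
    (hH : ∀ ℓ f g k, ContinuousOn (fun t => H t ℓ f g k) (Set.Icc 0 T))
    (W : ℝ → ℝ → ℝ) (hWm : Measurable (Function.uncurry W))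
    (hWb : ∀ u v, |W u v| ≤ 1)
    (Z : Fin F → ℝ → ℝ) (hZ : ∀ f, MemLp (Z f) ⊤ μI)
    (X : ℝ → Fin F → Lp ℝ ⊤ μI) (hX : IsGNDESolution F K L T W ρ H Z X)
    (Wn : ℕ → ℝ → ℝ → ℝ) (hWnm : ∀ n, Measurable (Function.uncurry (Wn n)))
    (hWnb : ∀ n u v, |Wn n u v| ≤ 1)
    (Zn : ℕ → Fin F → ℝ → ℝ) (hZn : ∀ n f, MemLp (Zn n f) ⊤ μI)
    (Xn : ℕ → ℝ → Fin F → Lp ℝ ⊤ μI)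
    (hXn : ∀ n, IsGNDESolution F K L T (Wn n) ρ H (Zn n) (Xn n))
    (hWconv : Filter.Tendsto (fun n => graphonOpNormSub (Wn n) W) Filter.atTop (nhds 0))
    (hZconv : Filter.Tendsto (fun n => vecLpNorm F 2 (fun f u => Zn n f u - Z f u))
      Filter.atTop (nhds 0)) :
    Filter.Tendsto
      (fun n => ⨆ t : Set.Icc (0:ℝ) T,
        vecLpNorm F 2 (fun f u => (Xn n (t : ℝ) f : ℝ → ℝ) u - (X (t : ℝ) f : ℝ → ℝ) u))
      Filter.atTop (nhds 0) := by
  classical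
  obtain ⟨hX0, X', hX'cont, hXprop⟩ := hX
  have hXn2 := fun n => (hXn n).2
  choose Xn' hXnprop using hXn2
  have hXn0 := fun n => (hXn n).1
  -- bound on the filter coefficients
  have hHcont : ContinuousOn (fun t => H t) (Set.Icc 0 T) := by
    apply continuousOn_pi.2; intro ℓ
    apply continuousOn_pi.2; intro f
    apply continuousOn_pi.2; intro g
    exact continuousOn_pi.2 fun k => hH ℓ f g k
  obtain ⟨M₀, hM₀⟩ := isCompact_Icc.exists_bound_of_continuousOn hHcont
  set M : ℝ := max M₀ 0 with hMdef
  have hM0 : (0:ℝ) ≤ M := le_max_right _ _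
  have hM : ∀ t ∈ Set.Icc (0:ℝ) T, ∀ ℓ f g k, |H t ℓ f g k| ≤ M := by
    intro t ht ℓ f g k
    have h1 : |H t ℓ f g k| = ‖H t ℓ f g k‖ := rfl
    rw [h1]
    calc ‖H t ℓ f g k‖ ≤ ‖H t ℓ f g‖ := norm_le_pi_norm _ k
      _ ≤ ‖H t ℓ f‖ := norm_le_pi_norm _ g
      _ ≤ ‖H t ℓ‖ := norm_le_pi_norm _ f
      _ ≤ ‖H t‖ := norm_le_pi_norm _ ℓ
      _ ≤ M₀ := hM₀ t ht
      _ ≤ M := le_max_left _ _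
  set B : ℝ := F * K * M + 1 with hBdef
  have hB1 : (1:ℝ) ≤ B := by
    have : (0:ℝ) ≤ F * K * M := by positivity
    rw [hBdef]; linarith
  have hB0 : (0:ℝ) < B := by linarith
  -- bound R on the trajectory X
  have hXcont : ContinuousOn X (Set.Icc 0 T) :=
    fun t ht => ((hXprop t ht).1).continuousWithinAt
  obtain ⟨R₀, hR₀⟩ := isCompact_Icc.exists_bound_of_continuousOn hXcont
  set R : ℝ := F * max R₀ 0 with hRdef
  have hR0 : (0:ℝ) ≤ R := by positivity
  have hGoodX : ∀ (A : Fin F → Lp ℝ ⊤ μI), Good F (fun f => (A f : ℝ → ℝ)) :=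
    fun A f => (Lp.memLp (A f)).mono_exponent le_top
  have hn2top : ∀ (a : Lp ℝ ⊤ μI), n2 (a : ℝ → ℝ) ≤ ‖a‖ := by
    intro a
    rw [n2, Lp.norm_def]
    exact ENNReal.toReal_mono (Lp.eLpNorm_ne_top a)
      (eLpNorm_le_eLpNorm_of_exponent_le le_top (Lp.aestronglyMeasurable a))
  have hSSX : ∀ t ∈ Set.Icc (0:ℝ) T, SS F (fun f => (X t f : ℝ → ℝ)) ≤ R := by
    intro t ht
    rw [SS, hRdef]
    calc ∑ f : Fin F, n2 ((X t f : ℝ → ℝ))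
        ≤ ∑ _f : Fin F, max R₀ 0 := by
          refine Finset.sum_le_sum fun f _ => ?_
          calc n2 ((X t f : ℝ → ℝ)) ≤ ‖X t f‖ := hn2top _
            _ ≤ ‖X t‖ := norm_le_pi_norm _ f
            _ ≤ R₀ := hR₀ t ht
            _ ≤ max R₀ 0 := le_max_left _ _
      _ = F * max R₀ 0 := by
          rw [Finset.sum_const, Finset.card_univ, Fintype.card_fin, nsmul_eq_mul]
  -- the difference curves
  set g : ℕ → ℝ → EE F := fun n t => iota F (Xn n t) - iota F (X t) with hgdef
  set g' : ℕ → ℝ → EE F := fun n t => iota F (Xn' n t) - iota F (X' t) with hg'def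
  set ε : ℕ → ℝ := fun n => graphonOpNormSub (Wn n) W with hεdef
  have hε0 : ∀ n, 0 ≤ ε n := fun n => opNormSub_nonneg _ _
  set CK : ℝ := B ^ L * Real.sqrt F with hCKdef
  have hsqF : (0:ℝ) < Real.sqrt F := Real.sqrt_pos.2 (by exact_mod_cast hF)
  have hCK0 : (0:ℝ) < CK := by positivity
  set Cε : ℝ := L * B ^ L * K * R with hCεdef
  have hCε0 : (0:ℝ) ≤ Cε := by positivity
  -- derivative facts
  have hderiv : ∀ n, ∀ t ∈ Set.Icc (0:ℝ) T, HasDerivWithinAt (g n) (g' n t) (Set.Icc 0 T) t := by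
    intro n t ht
    have h1 : HasDerivWithinAt (Xn n) (Xn' n t) (Set.Icc 0 T) t := ((hXnprop n).2 t ht).1
    have h2 : HasDerivWithinAt X (X' t) (Set.Icc 0 T) t := (hXprop t ht).1
    have h3 := ((iota F).hasFDerivAt.comp_hasDerivWithinAt t h1)
    have h4 := ((iota F).hasFDerivAt.comp_hasDerivWithinAt t h2)
    exact h3.sub h4
  have hgcont : ∀ n, ContinuousOn (g n) (Set.Icc 0 T) :=
    fun n => fun t ht => (hderiv n t ht).continuousWithinAt
  -- the central derivative-norm bound
  have hbnd : ∀ n, ∀ t ∈ Set.Icc (0:ℝ) T, ‖g' n t‖ ≤ CK * ‖g n t‖ + Cε * ε n := by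
    intro n t ht
    set hs : List (Fin F → Fin F → Fin K → ℝ) := List.ofFn (H t) with hhsdef
    have hlen : hs.length = L := by rw [hhsdef, List.length_ofFn]
    have hhsM : ∀ hl ∈ hs, ∀ f g k, |hl f g k| ≤ M := by
      intro hl hmem f' g' k'
      obtain ⟨ℓ, rfl⟩ := List.mem_ofFn.1 hmem
      exact hM t ht ℓ f' g' k'
    set XC : Fin F → ℝ → ℝ := fun f => (X t f : ℝ → ℝ) with hXCdef
    set XnC : Fin F → ℝ → ℝ := fun f => (Xn n t f : ℝ → ℝ) with hXnCdef
    have hfold := fold_pert_lip (W := W) (W' := Wn n) hρ hWm hWb (hWnm n) (hWnb n) hM0 hs hhsM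
      (hGoodX (X t)) (hGoodX (Xn n t))
    -- identify ‖g' n t‖ with the SSd of the gnn outputs
    have hstep1 : ‖g' n t‖ ≤ ∑ f, ‖(g' n t) f‖ := EE_norm_le_sum _
    have hstep2 : ∑ f, ‖(g' n t) f‖
        = SSd F (gnn F K L (Wn n) ρ (H t) XnC) (gnn F K L W ρ (H t) XC) := by
      rw [SSd]
      refine Finset.sum_congr rfl fun f _ => ?_
      rw [hg'def]
      rw [iota_sub_apply_norm (Xn' n t) (X' t) f]
      refine n2_congr ?_
      filter_upwards [((hXnprop n).2 t ht).2 f, (hXprop t ht).2 f] with u h1 h2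
      rw [h1, h2]
    have hstep3 : SSd F (gnn F K L (Wn n) ρ (H t) XnC) (gnn F K L W ρ (H t) XC)
        ≤ B ^ L * SSd F XnC XC + L * B ^ L * (K * ε n) * SS F XC := by
      rw [gnn_eq_fold, gnn_eq_fold, ← hhsdef]
      calc SSd F (fold F K (Wn n) ρ hs XnC) (fold F K W ρ hs XC)
          ≤ B ^ hs.length * SSd F XnC XC
            + hs.length * B ^ hs.length * (K * graphonOpNormSub (Wn n) W) * SS F XC := hfold
        _ = B ^ L * SSd F XnC XC + L * B ^ L * (K * ε n) * SS F XC := by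
            rw [hlen, hεdef]
    have hstep4 : SSd F XnC XC ≤ Real.sqrt F * ‖g n t‖ := by
      have h1 : SSd F XnC XC = ∑ f, ‖(g n t) f‖ := by
        rw [SSd]
        refine Finset.sum_congr rfl fun f _ => ?_
        rw [hgdef, iota_sub_apply_norm (Xn n t) (X t) f]
      rw [h1]
      exact sum_norm_le_sqrt _
    calc ‖g' n t‖ ≤ B ^ L * SSd F XnC XC + L * B ^ L * (K * ε n) * SS F XC := by
          rw [← hstep2] at hstep3
          exact hstep1.trans hstep3
      _ ≤ B ^ L * (Real.sqrt F * ‖g n t‖) + L * B ^ L * (K * ε n) * R := by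
          refine add_le_add (mul_le_mul_of_nonneg_left hstep4 (by positivity)) ?_
          refine mul_le_mul_of_nonneg_left (hSSX t ht)
            (mul_nonneg (by positivity) (mul_nonneg (by positivity) (hε0 n)))
      _ = CK * ‖g n t‖ + Cε * ε n := by rw [hCKdef, hCεdef]; ring
  -- Gronwall
  have hgron : ∀ n, ∀ t ∈ Set.Icc (0:ℝ) T,
      ‖g n t‖ ≤ gronwallBound (‖g n 0‖) CK (Cε * ε n) (t - 0) := by
    intro n
    refine norm_le_gronwallBound_of_norm_deriv_right_le (f' := g' n) (hgcont n) ?_ le_rfl ?_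
    · intro x hx
      refine (hderiv n x ⟨hx.1, le_of_lt hx.2⟩).mono_of_mem_nhdsWithin ?_
      rw [mem_nhdsWithin]
      refine ⟨Set.Iio T, isOpen_Iio, hx.2, ?_⟩
      rintro y ⟨hy1, hy2⟩
      exact ⟨le_trans hx.1 hy2, le_of_lt hy1⟩
    · intro x hx
      exact hbnd n x ⟨hx.1, le_of_lt hx.2⟩
  set Bnd : ℕ → ℝ := fun n => (‖g n 0‖ + (Cε / CK) * ε n) * Real.exp (CK * T) with hBnddef
  have hgB : ∀ n, ∀ t ∈ Set.Icc (0:ℝ) T, ‖g n t‖ ≤ Bnd n := by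
    intro n t ht
    refine (hgron n t ht).trans ?_
    rw [gronwallBound_of_K_ne_0 (ne_of_gt hCK0), hBnddef]
    have he1 : Real.exp (CK * (t - 0)) ≤ Real.exp (CK * T) := by
      refine Real.exp_le_exp.2 ?_
      have : t - 0 ≤ T := by linarith [ht.2]
      exact mul_le_mul_of_nonneg_left this (le_of_lt hCK0)
    have he2 : Real.exp (CK * (t - 0)) - 1 ≤ Real.exp (CK * T) := by linarith
    have he3 : (0:ℝ) < Real.exp (CK * (t-0)) := Real.exp_pos _
    have hg0 : (0:ℝ) ≤ ‖g n 0‖ := norm_nonneg _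
    have hfrac : (0:ℝ) ≤ Cε * ε n / CK :=
      div_nonneg (mul_nonneg hCε0 (hε0 n)) (le_of_lt hCK0)
    calc ‖g n 0‖ * Real.exp (CK * (t - 0)) + Cε * ε n / CK * (Real.exp (CK * (t - 0)) - 1)
        ≤ ‖g n 0‖ * Real.exp (CK * T) + Cε * ε n / CK * Real.exp (CK * T) := by
          refine add_le_add (mul_le_mul_of_nonneg_left he1 hg0)
            (mul_le_mul_of_nonneg_left he2 hfrac)
      _ = (‖g n 0‖ + Cε / CK * ε n) * Real.exp (CK * T) := by ring
  -- identify the supremand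
  have hsupf : ∀ n (t : Set.Icc (0:ℝ) T),
      vecLpNorm F 2 (fun f u => (Xn n (t : ℝ) f : ℝ → ℝ) u - (X (t : ℝ) f : ℝ → ℝ) u)
        = ‖g n (t : ℝ)‖ := by
    intro n t
    rw [hgdef, iota_norm_sub]
  have hBnd0 : ∀ n, 0 ≤ Bnd n := fun n =>
    mul_nonneg (add_nonneg (norm_nonneg _) (mul_nonneg (by positivity) (hε0 n)))
      (le_of_lt (Real.exp_pos _))
  have hsup_le : ∀ n, (⨆ t : Set.Icc (0:ℝ) T,
      vecLpNorm F 2 (fun f u => (Xn n (t : ℝ) f : ℝ → ℝ) u - (X (t : ℝ) f : ℝ → ℝ) u)) ≤ Bnd n := by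
    intro n
    refine Real.iSup_le (fun t => ?_) (hBnd0 n)
    rw [hsupf n t]
    exact hgB n (t : ℝ) t.2
  have hsup_nonneg : ∀ n, 0 ≤ (⨆ t : Set.Icc (0:ℝ) T,
      vecLpNorm F 2 (fun f u => (Xn n (t : ℝ) f : ℝ → ℝ) u - (X (t : ℝ) f : ℝ → ℝ) u)) :=
    fun n => Real.iSup_nonneg fun t => vecLpNorm_nonneg _ _ _
  -- convergence of the bound
  have hδconv : Tendsto (fun n => ‖g n 0‖) atTop (nhds 0) := by
    have heq : ∀ n, ‖g n 0‖ = vecLpNorm F 2 (fun f u => Zn n f u - Z f u) := by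
      intro n
      rw [hgdef, iota_norm_sub]
      refine vecLpNorm_congr fun f => ?_
      filter_upwards [hXn0 n f, hX0 f] with u h1 h2
      rw [h1, h2]
    simpa [heq] using hZconv
  have hBndconv : Tendsto Bnd atTop (nhds 0) := by
    rw [hBnddef]
    have h1 : Tendsto (fun n => ‖g n 0‖ + (Cε / CK) * ε n) atTop (nhds (0 + (Cε/CK) * 0)) :=
      hδconv.add (hWconv.const_mul _)
    have h2 := h1.mul_const (Real.exp (CK * T))
    simpa using h2
  exact squeeze_zero hsup_nonneg hsup_le hBndconv
end GNDEProof7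
end GNDEProof6
end GNDEProof5
end GNDEProof4
end GNDEProof3
end GNDEProof2
end GNDEProof
end
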